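/- Fix integers a ≤ b ≤ c with c ∈ {b+1, ..., a+b−1} and consider N_{c+1}^{a,b,c}-bootstrap percolation. Let Γ > 0 be a sufficiently large constant, set h = h(p) = c·p^{−1/2}·(log(1/p))^{1/2}, let R₁ = [h]² × [c], and L = L(p) = exp(Γ·p^{−1/2}·(log(1/p))^{3/2}). Then the conditional probability ℙ_p(I•([L]³) | I•(R₁)) → 1 as p → 0. -/

import Mathlib

open scoped Classical

/-- Vertices of the three-dimensional lattice. -/
abbrev V3 : Type := ℤ × ℤ × ℤ

/-- The anisotropic neighbourhood `N_{a,b,c} ⊂ ℤ³`: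
nonzero multiples of `e₁` up to `a`, of `e₂` up to `b`, of `e₃` up to `c`. -/
def N3 (a b c : ℕ) : Set V3 :=
  {u | (u.1 ≠ 0 ∧ |u.1| ≤ (a : ℤ) ∧ u.2.1 = 0 ∧ u.2.2 = 0) ∨
       (u.2.1 ≠ 0 ∧ |u.2.1| ≤ (b : ℤ) ∧ u.1 = 0 ∧ u.2.2 = 0) ∨
       (u.2.2 ≠ 0 ∧ |u.2.2| ≤ (c : ℤ) ∧ u.1 = 0 ∧ u.2.1 = 0)}

/-- One step of the `r`-neighbour bootstrap dynamics inside the region `dom`: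
a healthy vertex of `dom` becomes infected when it has at least `r` infected
neighbours (its neighbours being its translates by `N_{a,b,c}`). -/
def step3 (a b c r : ℕ) (dom S : Set V3) : Set V3 :=
  S ∪ {x | x ∈ dom ∧ r ≤ {u | u ∈ N3 a b c ∧ x + u ∈ S}.ncard}

/-- The closure `⟨A⟩` of `A` under the `N_r^{a,b,c}`-bootstrap process in `dom`. -/
def closure3 (a b c r : ℕ) (dom A : Set V3) : Set V3 :=
  ⋃ n, (step3 a b c r dom)^[n] (A ∩ dom)

/-- The rectangle `[x]×[y]×[z]` as a finset of `ℤ³`. -/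
noncomputable def rectF (x y z : ℕ) : Finset V3 :=
  Finset.Icc (1 : ℤ) (x : ℤ) ×ˢ (Finset.Icc (1 : ℤ) (y : ℤ) ×ˢ Finset.Icc (1 : ℤ) (z : ℤ))

/-- The rectangle `[x]×[y]×[z]` as a set. -/
def rect (x y z : ℕ) : Set V3 := ↑(rectF x y z)

/-- The event `I•(R)`: the region `R` is internally filled by the initial set `A`,
i.e. `R ⊆ ⟨A ∩ R⟩` for the process restricted to `R`. -/
def IFill (a b c r : ℕ) (R : Set V3) (A : Finset V3) : Prop :=
  R ⊆ closure3 a b c r R ↑A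

/-- The probability of the event `E` under the Bernoulli product measure with
density `p` on subsets of the finite vertex set `D`. -/
noncomputable def PP {α : Type*} [DecidableEq α] (D : Finset α) (p : ℝ)
    (E : Finset α → Prop) : ℝ :=
  ∑ A ∈ D.powerset, if E A then p ^ A.card * (1 - p) ^ (D.card - A.card) else 0

/-- Conditional probability `ℙ_p(E | F)`. -/
noncomputable def PPc {α : Type*} [DecidableEq α] (D : Finset α) (p : ℝ)
    (E F : Finset α → Prop) : ℝ :=
  PP D p (fun A => E A ∧ F A) / PP D p F

section Closure
variable {a b c r : ℕ} {dom dom' S S' A A' : Set V3}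

lemma N3_finite (a b c : ℕ) : (N3 a b c).Finite := by
  apply Set.Finite.subset (Set.finite_Icc ((-(a:ℤ), -(b:ℤ), -(c:ℤ))) ((a:ℤ), (b:ℤ), (c:ℤ)))
  rintro ⟨u1, u2, u3⟩ hu
  simp only [Set.mem_Icc, Prod.le_def]
  rcases hu with ⟨h1, h2, h3, h4⟩ | ⟨h1, h2, h3, h4⟩ | ⟨h1, h2, h3, h4⟩ <;>
    simp only at * <;> rw [abs_le] at h2 <;>
    refine ⟨⟨?_, ?_, ?_⟩, ?_, ?_, ?_⟩ <;> omega

lemma step3_subset : S ⊆ step3 a b c r dom S := Set.subset_union_left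

lemma step3_mono (hdom : dom ⊆ dom') (hS : S ⊆ S') :
    step3 a b c r dom S ⊆ step3 a b c r dom' S' := by
  intro x hx
  rcases hx with h | ⟨hxd, hcard⟩
  · exact Or.inl (hS h)
  · right
    refine ⟨hdom hxd, le_trans hcard ?_⟩
    exact Set.ncard_le_ncard (fun u hu => ⟨hu.1, hS hu.2⟩)
      ((N3_finite a b c).subset (fun u hu => hu.1))

lemma iterate_mono (hdom : dom ⊆ dom') (hS : S ⊆ S') (n : ℕ) :
    (step3 a b c r dom)^[n] S ⊆ (step3 a b c r dom')^[n] S' := by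
  induction n with
  | zero => exact hS
  | succ n ih =>
    rw [Function.iterate_succ_apply', Function.iterate_succ_apply']
    exact step3_mono hdom ih

lemma closure3_mono (hdom : dom ⊆ dom') (hA : A ∩ dom ⊆ A' ∩ dom') :
    closure3 a b c r dom A ⊆ closure3 a b c r dom' A' := by
  apply Set.iUnion_mono
  intro n
  exact iterate_mono hdom hA n

lemma iterate_subset_closure3 (n : ℕ) :
    (step3 a b c r dom)^[n] (A ∩ dom) ⊆ closure3 a b c r dom A :=
  Set.subset_iUnion (fun n => (step3 a b c r dom)^[n] (A ∩ dom)) n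

lemma subset_closure3 : A ∩ dom ⊆ closure3 a b c r dom A :=
  iterate_subset_closure3 0

lemma iterate_le_iterate {m n : ℕ} (hmn : m ≤ n) :
    (step3 a b c r dom)^[m] (A ∩ dom) ⊆ (step3 a b c r dom)^[n] (A ∩ dom) := by
  induction n with
  | zero => simpa [Nat.le_zero.mp hmn] using subset_rfl
  | succ n ih =>
    rcases Nat.lt_or_ge m (n+1) with h | h
    · rw [Function.iterate_succ_apply']
      exact (ih (by omega)).trans step3_subset
    · have : m = n + 1 := by omega
      subst this; exact subset_rfl

lemma closure3_closed {x : V3} (hx : x ∈ dom)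
    (hcard : r ≤ {u | u ∈ N3 a b c ∧ x + u ∈ closure3 a b c r dom A}.ncard) :
    x ∈ closure3 a b c r dom A := by
  set T := closure3 a b c r dom A with hT
  set U : Set V3 := {u | u ∈ N3 a b c ∧ x + u ∈ T} with hU
  have hUfin : U.Finite := (N3_finite a b c).subset (fun u hu => hu.1)
  have key : ∀ (V : Set V3), V.Finite → V ⊆ U →
      ∃ n, ∀ u ∈ V, x + u ∈ (step3 a b c r dom)^[n] (A ∩ dom) := by
    intro V hV
    refine Set.Finite.induction_on
      (motive := fun V _ => V ⊆ U → ∃ n, ∀ u ∈ V, x + u ∈ (step3 a b c r dom)^[n] (A ∩ dom))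
      V hV (fun _ => ⟨0, by simp⟩) ?_
    rintro u V hu hVfin ih hsub
    · 
      obtain ⟨n₁, hn₁⟩ := ih (fun w hw => hsub (Set.mem_insert_of_mem u hw))
      have hux : x + u ∈ T := (hsub (Set.mem_insert u V)).2
      rw [hT, closure3, Set.mem_iUnion] at hux
      obtain ⟨n₂, hn₂⟩ := hux
      refine ⟨max n₁ n₂, ?_⟩
      rintro w (rfl | hw)
      · exact iterate_le_iterate (le_max_right n₁ n₂) hn₂
      · exact iterate_le_iterate (le_max_left n₁ n₂) (hn₁ w hw)
  obtain ⟨n, hn⟩ := key U hUfin subset_rfl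
  have : x ∈ (step3 a b c r dom)^[n+1] (A ∩ dom) := by
    rw [Function.iterate_succ_apply']
    right
    refine ⟨hx, le_trans hcard ?_⟩
    apply Set.ncard_le_ncard
    · exact fun u hu => ⟨hu.1, hn u hu⟩
    · exact (N3_finite a b c).subset (fun u hu => hu.1)
  exact iterate_subset_closure3 (n+1) this

lemma infect_of_finset {x : V3} (hx : x ∈ dom) (W : Finset V3)
    (hW : ∀ u ∈ W, u ∈ N3 a b c ∧ x + u ∈ closure3 a b c r dom A)
    (hcard : r ≤ W.card) : x ∈ closure3 a b c r dom A := by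
  apply closure3_closed hx
  calc (r:ℕ) ≤ W.card := hcard
    _ = (↑W : Set V3).ncard := (Set.ncard_coe_finset W).symm
    _ ≤ _ := Set.ncard_le_ncard (fun u hu => hW u hu)
            ((N3_finite a b c).subset (fun u hu => hu.1))

lemma infect3 (x y z : ℤ) (hx : ((x, y, z) : V3) ∈ dom)
    (ε₁ ε₂ ε₃ : ℤ) (he₁ : ε₁ = 1 ∨ ε₁ = -1) (he₂ : ε₂ = 1 ∨ ε₂ = -1) (he₃ : ε₃ = 1 ∨ ε₃ = -1)
    (s₁ s₂ s₃ : ℕ) (hs₁ : s₁ ≤ a) (hs₂ : s₂ ≤ b) (hs₃ : s₃ ≤ c)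
    (hr : r ≤ s₁ + s₂ + s₃)
    (m₁ : ∀ k : ℤ, 1 ≤ k → k ≤ s₁ → ((x + ε₁*k, y, z) : V3) ∈ closure3 a b c r dom A)
    (m₂ : ∀ k : ℤ, 1 ≤ k → k ≤ s₂ → ((x, y + ε₂*k, z) : V3) ∈ closure3 a b c r dom A)
    (m₃ : ∀ k : ℤ, 1 ≤ k → k ≤ s₃ → ((x, y, z + ε₃*k) : V3) ∈ closure3 a b c r dom A) :
    ((x, y, z) : V3) ∈ closure3 a b c r dom A := by
  have hab1 : |ε₁| = 1 := by rcases he₁ with rfl | rfl <;> simp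
  have hab2 : |ε₂| = 1 := by rcases he₂ with rfl | rfl <;> simp
  have hab3 : |ε₃| = 1 := by rcases he₃ with rfl | rfl <;> simp
  have hne₁ : ε₁ ≠ 0 := by rcases he₁ with rfl | rfl <;> simp
  have hne₂ : ε₂ ≠ 0 := by rcases he₂ with rfl | rfl <;> simp
  have hne₃ : ε₃ ≠ 0 := by rcases he₃ with rfl | rfl <;> simp
  set W₁ : Finset V3 := (Finset.Icc (1:ℤ) (s₁:ℤ)).image (fun k => ((ε₁*k, 0, 0) : V3)) with hW₁
  set W₂ : Finset V3 := (Finset.Icc (1:ℤ) (s₂:ℤ)).image (fun k => ((0, ε₂*k, 0) : V3)) with hW₂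
  set W₃ : Finset V3 := (Finset.Icc (1:ℤ) (s₃:ℤ)).image (fun k => ((0, 0, ε₃*k) : V3)) with hW₃
  have hc₁ : W₁.card = s₁ := by
    rw [hW₁, Finset.card_image_of_injective _ (fun k k' hkk => by
      simpa [hne₁] using congrArg Prod.fst hkk), Int.card_Icc]
    omega
  have hc₂ : W₂.card = s₂ := by
    rw [hW₂, Finset.card_image_of_injective _ (fun k k' hkk => by
      have := congrArg (fun v : V3 => v.2.1) hkk
      simp only at this
      exact mul_left_cancel₀ hne₂ this), Int.card_Icc]
    omega
  have hc₃ : W₃.card = s₃ := by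
    rw [hW₃, Finset.card_image_of_injective _ (fun k k' hkk => by
      have := congrArg (fun v : V3 => v.2.2) hkk
      simp only at this
      exact mul_left_cancel₀ hne₃ this), Int.card_Icc]
    omega
  have habs : ∀ (ε k : ℤ), |ε| = 1 → |ε * k| = |k| := by
    intro ε k hε; rw [abs_mul, hε, one_mul]
  have d₁₂ : Disjoint W₁ W₂ := by
    rw [Finset.disjoint_left]
    rintro u hu hu'
    simp only [hW₁, hW₂, Finset.mem_image, Finset.mem_Icc] at hu hu'
    obtain ⟨k, hk, rfl⟩ := hu
    obtain ⟨k', hk', h⟩ := hu'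
    have := congrArg Prod.fst h
    simp only at this
    exact absurd this.symm (mul_ne_zero hne₁ (by omega))
  have d₁₃ : Disjoint W₁ W₃ := by
    rw [Finset.disjoint_left]
    rintro u hu hu'
    simp only [hW₁, hW₃, Finset.mem_image, Finset.mem_Icc] at hu hu'
    obtain ⟨k, hk, rfl⟩ := hu
    obtain ⟨k', hk', h⟩ := hu'
    have := congrArg Prod.fst h
    simp only at this
    exact absurd this.symm (mul_ne_zero hne₁ (by omega))
  have d₂₃ : Disjoint W₂ W₃ := by
    rw [Finset.disjoint_left]
    rintro u hu hu'
    simp only [hW₂, hW₃, Finset.mem_image, Finset.mem_Icc] at hu hu'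
    obtain ⟨k, hk, rfl⟩ := hu
    obtain ⟨k', hk', h⟩ := hu'
    have := congrArg (fun v : V3 => v.2.1) h
    simp only at this
    exact absurd this.symm (mul_ne_zero hne₂ (by omega))
  apply infect_of_finset hx (W₁ ∪ W₂ ∪ W₃)
  · intro u hu
    rcases Finset.mem_union.mp hu with hu' | hu₃
    · rcases Finset.mem_union.mp hu' with hu₁ | hu₂
      · simp only [hW₁, Finset.mem_image, Finset.mem_Icc] at hu₁
        obtain ⟨k, hk, rfl⟩ := hu₁
        constructor
        · left
          refine ⟨mul_ne_zero hne₁ (by omega), ?_, rfl, rfl⟩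
          rw [habs _ _ hab1, abs_of_nonneg (by omega)]
          omega
        · have := m₁ k hk.1 (by exact_mod_cast hk.2)
          simpa [Prod.ext_iff] using this
      · simp only [hW₂, Finset.mem_image, Finset.mem_Icc] at hu₂
        obtain ⟨k, hk, rfl⟩ := hu₂
        constructor
        · right; left
          refine ⟨mul_ne_zero hne₂ (by omega), ?_, rfl, rfl⟩
          rw [habs _ _ hab2, abs_of_nonneg (by omega)]
          omega
        · have := m₂ k hk.1 (by exact_mod_cast hk.2)
          simpa [Prod.ext_iff] using this
    · simp only [hW₃, Finset.mem_image, Finset.mem_Icc] at hu₃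
      obtain ⟨k, hk, rfl⟩ := hu₃
      constructor
      · right; right
        refine ⟨mul_ne_zero hne₃ (by omega), ?_, rfl, rfl⟩
        rw [habs _ _ hab3, abs_of_nonneg (by omega)]
        omega
      · have := m₃ k hk.1 (by exact_mod_cast hk.2)
        simpa [Prod.ext_iff] using this
  · rw [Finset.card_union_of_disjoint (by
      rw [Finset.disjoint_union_left]; exact ⟨d₁₃, d₂₃⟩),
      Finset.card_union_of_disjoint d₁₂, hc₁, hc₂, hc₃]
    exact hr

end Closure

section Prob
variable {α : Type*} [DecidableEq α] {p : ℝ} {D : Finset α}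

lemma PP_congr {E F : Finset α → Prop} (h : ∀ A ∈ D.powerset, (E A ↔ F A)) :
    PP D p E = PP D p F :=
  Finset.sum_congr rfl fun A hA => by rw [if_congr (h A hA) rfl rfl]

lemma PP_false : PP D p (fun _ => False) = 0 := by simp [PP]

lemma PP_insert {x : α} (hx : x ∉ D) (E : Finset α → Prop) :
    PP (insert x D) p E
      = p * PP D p (fun A => E (insert x A)) + (1 - p) * PP D p E := by
  unfold PP
  rw [Finset.sum_powerset_insert hx]
  rw [add_comm, Finset.mul_sum, Finset.mul_sum]
  congr 1
  · apply Finset.sum_congr rfl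
    intro A hA
    have hAD := Finset.mem_powerset.mp hA
    have hcard : A.card ≤ D.card := Finset.card_le_card hAD
    have hxA : x ∉ A := fun hxa => hx (hAD hxa)
    rw [Finset.card_insert_of_notMem hx, Finset.card_insert_of_notMem hxA]
    by_cases hE : E (insert x A) <;> simp only [hE, if_true, if_false, mul_zero]
    have : D.card + 1 - (A.card + 1) = D.card - A.card := by omega
    rw [this, pow_succ]
    ring
  · apply Finset.sum_congr rfl
    intro A hA
    have hAD := Finset.mem_powerset.mp hA
    have hcard : A.card ≤ D.card := Finset.card_le_card hAD
    rw [Finset.card_insert_of_notMem hx]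
    by_cases hE : E A <;> simp only [hE, if_true, if_false, mul_zero]
    have : D.card + 1 - A.card = (D.card - A.card) + 1 := by omega
    rw [this, pow_succ]
    ring

lemma PP_true (D : Finset α) (p : ℝ) : PP D p (fun _ => True) = 1 := by
  induction D using Finset.induction with
  | empty => simp [PP]
  | insert _ _ hx ih => rw [PP_insert hx]; rw [ih]; ring

lemma PP_term_nonneg (hp0 : 0 ≤ p) (hp1 : p ≤ 1) (n k : ℕ) :
    (0:ℝ) ≤ p ^ k * (1 - p) ^ (n - k) :=
  mul_nonneg (pow_nonneg hp0 _) (pow_nonneg (by linarith) _)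

lemma PP_nonneg (hp0 : 0 ≤ p) (hp1 : p ≤ 1) (E : Finset α → Prop) : 0 ≤ PP D p E := by
  apply Finset.sum_nonneg
  intro A _
  by_cases hE : E A <;> simp only [hE, if_true, if_false, le_refl]
  exact PP_term_nonneg hp0 hp1 _ _

lemma PP_mono (hp0 : 0 ≤ p) (hp1 : p ≤ 1) {E F : Finset α → Prop}
    (h : ∀ A ∈ D.powerset, E A → F A) : PP D p E ≤ PP D p F := by
  apply Finset.sum_le_sum
  intro A hA
  by_cases hE : E A
  · simp only [hE, if_true, h A hA hE, le_refl]
  · simp only [hE, if_false]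
    by_cases hF : F A <;> simp only [hF, if_true, if_false, le_refl]
    exact PP_term_nonneg hp0 hp1 _ _

lemma PP_add_compl (E : Finset α → Prop) :
    PP D p E + PP D p (fun A => ¬ E A) = 1 := by
  rw [← PP_true D p]
  unfold PP
  rw [← Finset.sum_add_distrib]
  apply Finset.sum_congr rfl
  intro A _
  by_cases hE : E A <;> simp [hE]

lemma PP_or_le (hp0 : 0 ≤ p) (hp1 : p ≤ 1) (E F : Finset α → Prop) :
    PP D p (fun A => E A ∨ F A) ≤ PP D p E + PP D p F := by
  unfold PP
  rw [← Finset.sum_add_distrib]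
  apply Finset.sum_le_sum
  intro A _
  have hw : (0:ℝ) ≤ p ^ A.card * (1 - p) ^ (D.card - A.card) := PP_term_nonneg hp0 hp1 _ _
  by_cases hE : E A <;> by_cases hF : F A <;> simp [hE, hF] <;> linarith

lemma PP_exists_le {ι : Type*} (hp0 : 0 ≤ p) (hp1 : p ≤ 1) (I : Finset ι)
    (Ei : ι → Finset α → Prop) :
    PP D p (fun A => ∃ i ∈ I, Ei i A) ≤ ∑ i ∈ I, PP D p (Ei i) := by
  induction I using Finset.induction with
  | empty => simp [PP_false]
  | @insert i₀ I hi ih =>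
    rw [Finset.sum_insert hi]
    calc PP D p (fun A => ∃ i ∈ insert i₀ I, Ei i A)
        = PP D p (fun A => Ei i₀ A ∨ ∃ i ∈ I, Ei i A) :=
          PP_congr (fun A _ => by simp)
      _ ≤ PP D p (Ei i₀) + PP D p (fun A => ∃ i ∈ I, Ei i A) := PP_or_le hp0 hp1 _ _
      _ ≤ _ := by linarith

lemma PP_restrict_union {S : Finset α} {E : Finset α → Prop}
    (hE : ∀ A, E A ↔ E (A ∩ S)) :
    ∀ (T : Finset α), Disjoint S T → PP (S ∪ T) p E = PP S p E := by
  intro T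
  induction T using Finset.induction with
  | empty => simp
  | @insert x T hx ih =>
    intro hdisj
    have hxS : x ∉ S := fun hxs =>
      (Finset.disjoint_left.mp hdisj hxs (Finset.mem_insert_self x T))
    have hdisj' : Disjoint S T :=
      hdisj.mono_right (Finset.subset_insert x T)
    have hxST : x ∉ S ∪ T := by
      simp only [Finset.mem_union, not_or]
      exact ⟨hxS, hx⟩
    rw [show S ∪ insert x T = insert x (S ∪ T) by
      ext y
      simp only [Finset.mem_insert, Finset.mem_union]
      tauto]
    rw [PP_insert hxST]
    have he : PP (S ∪ T) p (fun A => E (insert x A)) = PP (S ∪ T) p E := by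
      apply PP_congr
      intro A hA
      have hAsub := Finset.mem_powerset.mp hA
      have hxA : x ∉ A := fun h => hxST (hAsub h)
      have : (insert x A) ∩ S = A ∩ S := by
        ext y
        simp only [Finset.mem_inter, Finset.mem_insert]
        constructor
        · rintro ⟨(rfl | hyA), hyS⟩
          · exact absurd hyS hxS
          · exact ⟨hyA, hyS⟩
        · rintro ⟨hyA, hyS⟩; exact ⟨Or.inr hyA, hyS⟩
      rw [hE (insert x A), this, ← hE A]
    rw [he, ih hdisj']
    ring

lemma PP_restrict {S : Finset α} (hS : S ⊆ D) {E : Finset α → Prop}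
    (hE : ∀ A, E A ↔ E (A ∩ S)) : PP D p E = PP S p E := by
  rw [← Finset.union_sdiff_of_subset hS]
  exact PP_restrict_union hE (D \ S) Finset.disjoint_sdiff

lemma PP_empty (E : Finset α → Prop) : PP (∅ : Finset α) p E = if E ∅ then 1 else 0 := by
  simp [PP]

lemma PP_indep_union {S : Finset α} {E : Finset α → Prop}
    (hE : ∀ A, E A ↔ E (A ∩ S)) :
    ∀ (T : Finset α), Disjoint S T → ∀ (F : Finset α → Prop), (∀ A, F A ↔ F (A ∩ T)) →
      PP (S ∪ T) p (fun A => E A ∧ F A) = PP S p E * PP T p F := by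
  intro T
  induction T using Finset.induction with
  | empty =>
    intro _ F hF
    rw [Finset.union_empty, PP_empty]
    by_cases hF0 : F ∅
    · rw [if_pos hF0, mul_one]
      apply PP_congr
      intro A _
      have : F A ↔ True := by rw [hF A]; simp [hF0]
      simp [this]
    · rw [if_neg hF0, mul_zero]
      rw [show (0:ℝ) = PP S p (fun _ => False) from PP_false.symm]
      apply PP_congr
      intro A _
      have : ¬ F A := by rw [hF A]; simpa using hF0
      simp [this]
  | @insert x T hx ih =>
    intro hdisj F hF
    have hxS : x ∉ S := fun hxs =>
      (Finset.disjoint_left.mp hdisj hxs (Finset.mem_insert_self x T))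
    have hxT : x ∉ T := hx
    have hdisj' : Disjoint S T := hdisj.mono_right (Finset.subset_insert x T)
    have hxST : x ∉ S ∪ T := by
      simp only [Finset.mem_union, not_or]; exact ⟨hxS, hx⟩
    rw [show S ∪ insert x T = insert x (S ∪ T) by
      ext y
      simp only [Finset.mem_insert, Finset.mem_union]
      tauto]
    rw [PP_insert hxST, PP_insert hxT]
    set F₁ : Finset α → Prop := fun A => F (insert x (A ∩ T)) with hF₁def
    set F₀ : Finset α → Prop := fun A => F (A ∩ T) with hF₀def
    have hF₁supp : ∀ A, F₁ A ↔ F₁ (A ∩ T) := by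
      intro A; simp only [hF₁def, Finset.inter_assoc, Finset.inter_self]
    have hF₀supp : ∀ A, F₀ A ↔ F₀ (A ∩ T) := by
      intro A; simp only [hF₀def, Finset.inter_assoc, Finset.inter_self]
    have key₁ : ∀ A : Finset α, F (insert x A) ↔ F₁ A := by
      intro A
      rw [hF (insert x A), hF₁def]
      have hxx : insert x A ∩ insert x T = insert x (A ∩ T) := by
        ext y
        simp only [Finset.mem_inter, Finset.mem_insert]
        constructor
        · rintro ⟨(rfl | hyA), (h | hyT)⟩ <;> tauto
        · rintro (rfl | ⟨h1, h2⟩) <;> tauto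
      rw [hxx]
    have key₀ : ∀ A : Finset α, x ∉ A → (F A ↔ F₀ A) := by
      intro A hxA
      rw [hF A, hF₀def]
      have hxx : A ∩ insert x T = A ∩ T := by
        ext y
        simp only [Finset.mem_inter, Finset.mem_insert]
        constructor
        · rintro ⟨hyA, (rfl | hyT)⟩
          · exact absurd hyA hxA
          · exact ⟨hyA, hyT⟩
        · rintro ⟨hyA, hyT⟩; exact ⟨hyA, Or.inr hyT⟩
      rw [hxx]
    have h1 : PP (S ∪ T) p (fun A => E (insert x A) ∧ F (insert x A))
        = PP S p E * PP T p F₁ := by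
      rw [← ih hdisj' F₁ hF₁supp]
      apply PP_congr
      intro A hA
      have hAsub := Finset.mem_powerset.mp hA
      have hxA : x ∉ A := fun h => hxST (hAsub h)
      have hiE : E (insert x A) ↔ E A := by
        rw [hE (insert x A), show (insert x A) ∩ S = A ∩ S by
          ext y
          simp only [Finset.mem_inter, Finset.mem_insert]
          constructor
          · rintro ⟨(rfl | hyA), hyS⟩
            · exact absurd hyS hxS
            · exact ⟨hyA, hyS⟩
          · rintro ⟨hyA, hyS⟩; exact ⟨Or.inr hyA, hyS⟩, ← hE A]
      rw [hiE, key₁ A]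
    have h0 : PP (S ∪ T) p (fun A => E A ∧ F A) = PP S p E * PP T p F₀ := by
      rw [← ih hdisj' F₀ hF₀supp]
      apply PP_congr
      intro A hA
      have hAsub := Finset.mem_powerset.mp hA
      have hxA : x ∉ A := fun h => hxST (hAsub h)
      rw [key₀ A hxA]
    have h2 : PP T p (fun A => F (insert x A)) = PP T p F₁ :=
      PP_congr (fun A _ => key₁ A)
    have h3 : PP T p F = PP T p F₀ := by
      apply PP_congr
      intro A hA
      have hAsub := Finset.mem_powerset.mp hA
      exact key₀ A (fun h => hxT (hAsub h))
    rw [h1, h0, h2, h3]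
    ring

lemma PP_indep {S T : Finset α} (hS : S ⊆ D) (hT : T ⊆ D) (hST : Disjoint S T)
    {E F : Finset α → Prop} (hE : ∀ A, E A ↔ E (A ∩ S)) (hF : ∀ A, F A ↔ F (A ∩ T)) :
    PP D p (fun A => E A ∧ F A) = PP D p E * PP D p F := by
  have hEF : ∀ A, (E A ∧ F A) ↔ (E (A ∩ (S ∪ T)) ∧ F (A ∩ (S ∪ T))) := by
    intro A
    have e1 : A ∩ (S ∪ T) ∩ S = A ∩ S := by
      ext y
      simp only [Finset.mem_inter, Finset.mem_union]
      tauto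
    have e2 : A ∩ (S ∪ T) ∩ T = A ∩ T := by
      ext y
      simp only [Finset.mem_inter, Finset.mem_union]
      tauto
    constructor
    · rintro ⟨he, hf⟩
      exact ⟨by rwa [hE (A ∩ (S ∪ T)), e1, ← hE A], by rwa [hF (A ∩ (S ∪ T)), e2, ← hF A]⟩
    · rintro ⟨he, hf⟩
      rw [hE (A ∩ (S ∪ T)), e1, ← hE A] at he
      rw [hF (A ∩ (S ∪ T)), e2, ← hF A] at hf
      exact ⟨he, hf⟩
  rw [PP_restrict (Finset.union_subset hS hT) hEF,
    PP_indep_union hE T hST F hF, PP_restrict hS hE, PP_restrict hT hF]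

lemma PP_subset_eq {S : Finset α} (hS : S ⊆ D) :
    PP D p (fun A => S ⊆ A) = p ^ S.card := by
  rw [PP_restrict hS (fun A => by
    constructor
    · intro h; exact Finset.subset_inter h subset_rfl
    · intro h; exact h.trans Finset.inter_subset_left)]
  unfold PP
  rw [Finset.sum_eq_single S]
  · simp
  · intro A hA hne
    have : ¬ S ⊆ A := fun h => hne (Finset.Subset.antisymm (Finset.mem_powerset.mp hA) h)
    simp [this]
  · intro h
    exact absurd (Finset.mem_powerset.mpr subset_rfl) h

lemma PP_inter_empty {S : Finset α} (hS : S ⊆ D) :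
    PP D p (fun A => A ∩ S = ∅) = (1 - p) ^ S.card := by
  rw [PP_restrict hS (fun A => by rw [Finset.inter_assoc, Finset.inter_self])]
  unfold PP
  rw [Finset.sum_eq_single (∅ : Finset α)]
  · simp
  · intro A hA hne
    have hsub := Finset.mem_powerset.mp hA
    have : ¬ (A ∩ S = ∅) := by
      rw [Finset.inter_eq_left.mpr hsub]
      exact hne
    simp [this]
  · intro h
    exact absurd (Finset.mem_powerset.mpr (Finset.empty_subset S)) h

lemma PP_not_subset {S : Finset α} (hS : S ⊆ D) :
    PP D p (fun A => ¬ S ⊆ A) = 1 - p ^ S.card := by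
  have := PP_add_compl (D := D) (p := p) (fun A => S ⊆ A)
  rw [PP_subset_eq hS] at this
  linarith

lemma PP_blocks {ι : Type*} [DecidableEq ι] (I : Finset ι) (B : ι → Finset α)
    (hsub : ∀ i ∈ I, B i ⊆ D)
    (hdisj : ∀ i ∈ I, ∀ j ∈ I, i ≠ j → Disjoint (B i) (B j)) :
    PP D p (fun A => ∀ i ∈ I, ¬ B i ⊆ A) = ∏ i ∈ I, (1 - p ^ (B i).card) := by
  induction I using Finset.induction with
  | empty =>
    rw [Finset.prod_empty, show (1:ℝ) = PP D p (fun _ => True) from (PP_true D p).symm]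
    apply PP_congr
    intro A _
    simp
  | @insert i₀ I hi ih =>
    rw [Finset.prod_insert hi]
    have hTsub : I.sup B ⊆ D := Finset.sup_le (fun i hiI => hsub i (Finset.mem_insert_of_mem hiI))
    have hdisj' : Disjoint (B i₀) (I.sup B) := by
      rw [Finset.disjoint_sup_right]
      intro i hiI
      exact hdisj i₀ (Finset.mem_insert_self i₀ I) i (Finset.mem_insert_of_mem hiI)
        (fun h => hi (h ▸ hiI))
    have hEsupp : ∀ A : Finset α, (¬ B i₀ ⊆ A) ↔ (¬ B i₀ ⊆ A ∩ (B i₀)) := by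
      intro A
      constructor
      · intro h hc; exact h (hc.trans Finset.inter_subset_left)
      · intro h hc; exact h (Finset.subset_inter hc subset_rfl)
    have hFsupp : ∀ A : Finset α, (∀ i ∈ I, ¬ B i ⊆ A) ↔ (∀ i ∈ I, ¬ B i ⊆ A ∩ I.sup B) := by
      intro A
      constructor
      · intro h i hiI hc
        exact h i hiI (hc.trans Finset.inter_subset_left)
      · intro h i hiI hc
        exact h i hiI (Finset.subset_inter hc (Finset.le_sup hiI))
    calc PP D p (fun A => ∀ i ∈ insert i₀ I, ¬ B i ⊆ A)
        = PP D p (fun A => (¬ B i₀ ⊆ A) ∧ (∀ i ∈ I, ¬ B i ⊆ A)) :=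
          PP_congr (fun A _ => by simp [Finset.forall_mem_insert])
      _ = PP D p (fun A => ¬ B i₀ ⊆ A) * PP D p (fun A => ∀ i ∈ I, ¬ B i ⊆ A) :=
          PP_indep (hsub i₀ (Finset.mem_insert_self i₀ I)) hTsub hdisj' hEsupp hFsupp
      _ = (1 - p ^ (B i₀).card) * ∏ i ∈ I, (1 - p ^ (B i).card) := by
          rw [PP_not_subset (hsub i₀ (Finset.mem_insert_self i₀ I)),
            ih (fun i hiI => hsub i (Finset.mem_insert_of_mem hiI))
              (fun i hiI j hjI hij => hdisj i (Finset.mem_insert_of_mem hiI)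
                j (Finset.mem_insert_of_mem hjI) hij)]

lemma PP_pos (hp0 : 0 < p) (hp1 : p < 1) {E : Finset α → Prop}
    {A₀ : Finset α} (hA₀ : A₀ ∈ D.powerset) (hEA₀ : E A₀) : 0 < PP D p E := by
  have hterm : (0:ℝ) < p ^ A₀.card * (1 - p) ^ (D.card - A₀.card) := by
    apply mul_pos (pow_pos hp0 _) (pow_pos (by linarith) _)
  calc (0:ℝ) < p ^ A₀.card * (1 - p) ^ (D.card - A₀.card) := hterm
    _ = if E A₀ then p ^ A₀.card * (1 - p) ^ (D.card - A₀.card) else 0 := by rw [if_pos hEA₀]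
    _ ≤ PP D p E := Finset.single_le_sum (f := fun A =>
        if E A then p ^ A.card * (1 - p) ^ (D.card - A.card) else 0)
        (fun A _ => by
          by_cases hE : E A <;> simp only [hE, if_true, if_false, le_refl]
          exact PP_term_nonneg hp0.le hp1.le _ _) hA₀

end Prob

lemma mem_rect {m n k : ℕ} {v : V3} :
    v ∈ rect m n k ↔ (1 ≤ v.1 ∧ v.1 ≤ (m:ℤ)) ∧ (1 ≤ v.2.1 ∧ v.2.1 ≤ (n:ℤ)) ∧
      (1 ≤ v.2.2 ∧ v.2.2 ≤ (k:ℤ)) := by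
  simp only [rect, rectF, Finset.mem_coe, Finset.mem_product, Finset.mem_Icc]

theorem grow (a b c h Z L : ℕ) (A : Finset V3)
    (ha2 : 2 ≤ a) (hab : a ≤ b) (hbc : b < c) (hcab : c < a + b)
    (hbh : b ≤ h) (hcZ : c ≤ Z) (hhL : h ≤ L) (hZL : Z ≤ L)
    (seed : rect h h c ⊆ closure3 a b c (c+1) (rect L L L) ↑A)
    (g1 : ∀ z : ℤ, (c:ℤ) < z → z ≤ (Z:ℤ) → ∃ v ∈ A,
      (1 ≤ v.1 ∧ v.1 ≤ (h:ℤ)) ∧ (1 ≤ v.2.1 ∧ v.2.1 ≤ (h:ℤ)) ∧ v.2.2 = z)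
    (g2 : ∀ x : ℤ, (h:ℤ) < x → x ≤ (L:ℤ) → ∃ y₀ z₀ : ℤ, 1 ≤ y₀ ∧ y₀ + b ≤ (h:ℤ) + 1 ∧
      1 ≤ z₀ ∧ z₀ + c ≤ (Z:ℤ) + 1 ∧
      ∀ y z : ℤ, y₀ ≤ y → y < y₀ + b → z₀ ≤ z → z < z₀ + c → ((x,y,z) : V3) ∈ A)
    (g3 : ∀ y : ℤ, (h:ℤ) < y → y ≤ (L:ℤ) → ∃ x₀ z₀ : ℤ, 1 ≤ x₀ ∧ x₀ + a ≤ (L:ℤ) + 1 ∧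
      1 ≤ z₀ ∧ z₀ + c ≤ (Z:ℤ) + 1 ∧
      ∀ x z : ℤ, x₀ ≤ x → x < x₀ + a → z₀ ≤ z → z < z₀ + c → ((x,y,z) : V3) ∈ A)
    (g4 : ∀ z : ℤ, (Z:ℤ) < z → z ≤ (L:ℤ) → ∃ v ∈ A,
      (1 ≤ v.1 ∧ v.1 ≤ (L:ℤ)) ∧ (1 ≤ v.2.1 ∧ v.2.1 ≤ (L:ℤ)) ∧ v.2.2 = z) :
    rect L L L ⊆ closure3 a b c (c+1) (rect L L L) ↑A := by
  set T := closure3 a b c (c+1) (rect L L L) (↑A : Set V3) with hTdef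
  have hbhZ : (b:ℤ) ≤ (h:ℤ) := by exact_mod_cast hbh
  have habZ : (a:ℤ) ≤ (b:ℤ) := by exact_mod_cast hab
  have hbcZ : (b:ℤ) < (c:ℤ) := by exact_mod_cast hbc
  have hcabZ : (c:ℤ) < (a:ℤ) + (b:ℤ) := by exact_mod_cast hcab
  have ha2Z : (2:ℤ) ≤ (a:ℤ) := by exact_mod_cast ha2
  have hcZZ : (c:ℤ) ≤ (Z:ℤ) := by exact_mod_cast hcZ
  have hhLZ : (h:ℤ) ≤ (L:ℤ) := by exact_mod_cast hhL
  have hZLZ : (Z:ℤ) ≤ (L:ℤ) := by exact_mod_cast hZL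
  have memdom : ∀ x y z : ℤ, 1 ≤ x → x ≤ (L:ℤ) → 1 ≤ y → y ≤ (L:ℤ) → 1 ≤ z → z ≤ (L:ℤ) →
      ((x,y,z):V3) ∈ rect L L L := by
    intro x y z h1 h2 h3 h4 h5 h6
    rw [mem_rect]
    exact ⟨⟨h1, h2⟩, ⟨h3, h4⟩, ⟨h5, h6⟩⟩
  have memA : ∀ x y z : ℤ, ((x,y,z):V3) ∈ A → 1 ≤ x → x ≤ (L:ℤ) → 1 ≤ y → y ≤ (L:ℤ) →
      1 ≤ z → z ≤ (L:ℤ) → ((x,y,z):V3) ∈ T := by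
    intro x y z hA h1 h2 h3 h4 h5 h6
    exact subset_closure3 ⟨hA, memdom x y z h1 h2 h3 h4 h5 h6⟩
  -- Stage 1
  have C1 : ∀ n : ℕ, ∀ x y z : ℤ, 1 ≤ x → x ≤ (h:ℤ) → 1 ≤ y → y ≤ (h:ℤ) →
      1 ≤ z → z ≤ (Z:ℤ) → z.toNat ≤ n → ((x,y,z):V3) ∈ T := by
    intro n
    induction n using Nat.strong_induction_on with
    | _ n IH =>
    intro x y z hx1 hxh hy1 hyh hz1 hzZ hzn
    by_cases hzc : z ≤ (c:ℤ)
    · apply seed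
      rw [mem_rect]
      exact ⟨⟨hx1, hxh⟩, ⟨hy1, hyh⟩, ⟨hz1, hzc⟩⟩
    · push_neg at hzc
      obtain ⟨v, hvA, ⟨hv11, hv12⟩, ⟨hv21, hv22⟩, hv3⟩ := g1 z hzc hzZ
      obtain ⟨xs, ys, zs⟩ := v
      simp only at hv11 hv12 hv21 hv22 hv3
      rw [hv3] at hvA
      have below : ∀ x' y' : ℤ, 1 ≤ x' → x' ≤ (h:ℤ) → 1 ≤ y' → y' ≤ (h:ℤ) →
          ∀ k : ℤ, 1 ≤ k → k ≤ (c:ℤ) → ((x', y', z - k):V3) ∈ T := by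
        intro x' y' h1 h2 h3 h4 k hk1 hk2
        exact IH (n-1) (by omega) x' y' (z-k) h1 h2 h3 h4 (by omega) (by omega) (by omega)
      have inner : ∀ d : ℕ, ∀ x' y' : ℤ, 1 ≤ x' → x' ≤ (h:ℤ) → 1 ≤ y' → y' ≤ (h:ℤ) →
          (x' - xs).natAbs + (y' - ys).natAbs ≤ d → ((x', y', z):V3) ∈ T := by
        intro d
        induction d with
        | zero =>
          intro x' y' h1 h2 h3 h4 hd
          have hx : x' = xs := by omega
          have hy : y' = ys := by omega
          rw [hx, hy]
          exact memA xs ys z hvA (by omega) (by omega) (by omega) (by omega) (by omega) (by omega)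
        | succ d ihd =>
          intro x' y' h1 h2 h3 h4 hd
          by_cases hin : (x' - xs).natAbs + (y' - ys).natAbs ≤ d
          · exact ihd x' y' h1 h2 h3 h4 hin
          · have hdom' := memdom x' y' z h1 (by omega) h3 (by omega) (by omega) (by omega)
            rcases lt_trichotomy x' xs with hlt | heq | hgt
            · -- x' < xs : step right, ε₁ = 1
              apply infect3 x' y' z hdom' 1 1 (-1) (Or.inl rfl) (Or.inl rfl) (Or.inr rfl)
                1 0 c (by omega) (by omega) le_rfl (by omega)
              · intro k hk1 hk2
                have hk : k = 1 := by omega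
                subst hk
                have he : x' + 1*1 = x' + 1 := by ring
                rw [he]
                exact ihd (x'+1) y' (by omega) (by omega) h3 h4 (by omega)
              · intro k hk1 hk2
                exfalso; omega
              · intro k hk1 hk2
                have he : z + (-1)*k = z - k := by ring
                rw [he]
                exact below x' y' h1 h2 h3 h4 k hk1 hk2
            · -- x' = xs: y differs
              subst heq
              rcases lt_trichotomy y' ys with hylt | hyeq | hygt
              · apply infect3 x' y' z hdom' 1 1 (-1) (Or.inl rfl) (Or.inl rfl) (Or.inr rfl)
                  0 1 c (by omega) (by omega) le_rfl (by omega)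
                · intro k hk1 hk2; exfalso; omega
                · intro k hk1 hk2
                  have hk : k = 1 := by omega
                  subst hk
                  have he : y' + 1*1 = y' + 1 := by ring
                  rw [he]
                  exact ihd x' (y'+1) h1 h2 (by omega) (by omega) (by omega)
                · intro k hk1 hk2
                  have he : z + (-1)*k = z - k := by ring
                  rw [he]
                  exact below x' y' h1 h2 h3 h4 k hk1 hk2
              · exfalso; omega
              · apply infect3 x' y' z hdom' 1 (-1) (-1) (Or.inl rfl) (Or.inr rfl) (Or.inr rfl)
                  0 1 c (by omega) (by omega) le_rfl (by omega)
                · intro k hk1 hk2; exfalso; omega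
                · intro k hk1 hk2
                  have hk : k = 1 := by omega
                  subst hk
                  have he : y' + (-1)*1 = y' - 1 := by ring
                  rw [he]
                  exact ihd x' (y'-1) h1 h2 (by omega) (by omega) (by omega)
                · intro k hk1 hk2
                  have he : z + (-1)*k = z - k := by ring
                  rw [he]
                  exact below x' y' h1 h2 h3 h4 k hk1 hk2
            · apply infect3 x' y' z hdom' (-1) 1 (-1) (Or.inr rfl) (Or.inl rfl) (Or.inr rfl)
                1 0 c (by omega) (by omega) le_rfl (by omega)
              · intro k hk1 hk2
                have hk : k = 1 := by omega
                subst hk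
                have he : x' + (-1)*1 = x' - 1 := by ring
                rw [he]
                exact ihd (x'-1) y' (by omega) (by omega) h3 h4 (by omega)
              · intro k hk1 hk2; exfalso; omega
              · intro k hk1 hk2
                have he : z + (-1)*k = z - k := by ring
                rw [he]
                exact below x' y' h1 h2 h3 h4 k hk1 hk2
      exact inner ((x - xs).natAbs + (y - ys).natAbs) x y hx1 hxh hy1 hyh le_rfl
  -- Stage 2: fill [1,L] × [1,h] × [1,Z]
  have C2 : ∀ n : ℕ, ∀ x y z : ℤ, 1 ≤ x → x ≤ (L:ℤ) → 1 ≤ y → y ≤ (h:ℤ) →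
      1 ≤ z → z ≤ (Z:ℤ) → x.toNat ≤ n → ((x,y,z):V3) ∈ T := by
    intro n
    induction n using Nat.strong_induction_on with
    | _ n IH =>
    intro x y z hx1 hxL hy1 hyh hz1 hzZ hxn
    by_cases hxh : x ≤ (h:ℤ)
    · exact C1 z.toNat x y z hx1 hxh hy1 hyh hz1 hzZ le_rfl
    · push_neg at hxh
      obtain ⟨y₀, z₀, hy₀1, hy₀h, hz₀1, hz₀Z, hblk⟩ := g2 x hxh hxL
      have hleft : ∀ x' y' z' : ℤ, 1 ≤ x' → x' < x → 1 ≤ y' → y' ≤ (h:ℤ) →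
          1 ≤ z' → z' ≤ (Z:ℤ) → ((x',y',z'):V3) ∈ T := by
        intro x' y' z' h1 h2 h3 h4 h5 h6
        exact IH (n-1) (by omega) x' y' z' h1 (by omega) h3 h4 h5 h6 (by omega)
      have rows : ∀ d : ℕ, ∀ y' z' : ℤ, 1 ≤ y' → y' ≤ (h:ℤ) → z₀ ≤ z' → z' < z₀ + c →
          (y₀ - y').toNat + (y' - (y₀ + b - 1)).toNat ≤ d → ((x, y', z'):V3) ∈ T := by
        intro d
        induction d with
        | zero =>
          intro y' z' h1 h2 h3 h4 hd
          exact memA x y' z' (hblk y' z' (by omega) (by omega) h3 h4)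
            (by omega) (by omega) h1 (by omega) (by omega) (by omega)
        | succ d ihd =>
          intro y' z' h1 h2 h3 h4 hd
          by_cases hin : (y₀ - y').toNat + (y' - (y₀ + b - 1)).toNat ≤ d
          · exact ihd y' z' h1 h2 h3 h4 hin
          · have hdom' := memdom x y' z' (by omega) (by omega) h1 (by omega) (by omega) (by omega)
            by_cases hside : y₀ + b - 1 < y'
            · apply infect3 x y' z' hdom' (-1) (-1) 1 (Or.inr rfl) (Or.inr rfl) (Or.inl rfl)
                a b 0 le_rfl le_rfl (by omega) (by omega)
              · intro k hk1 hk2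
                have he : x + (-1)*k = x - k := by ring
                rw [he]
                exact hleft (x-k) y' z' (by omega) (by omega) h1 h2 (by omega) (by omega)
              · intro k hk1 hk2
                have he : y' + (-1)*k = y' - k := by ring
                rw [he]
                exact ihd (y'-k) z' (by omega) (by omega) h3 h4 (by omega)
              · intro k hk1 hk2; exfalso; omega
            · apply infect3 x y' z' hdom' (-1) 1 1 (Or.inr rfl) (Or.inl rfl) (Or.inl rfl)
                a b 0 le_rfl le_rfl (by omega) (by omega)
              · intro k hk1 hk2
                have he : x + (-1)*k = x - k := by ring
                rw [he]
                exact hleft (x-k) y' z' (by omega) (by omega) h1 h2 (by omega) (by omega)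
              · intro k hk1 hk2
                have he : y' + 1*k = y' + k := by ring
                rw [he]
                exact ihd (y'+k) z' (by omega) (by omega) h3 h4 (by omega)
              · intro k hk1 hk2; exfalso; omega
      have plane : ∀ d : ℕ, ∀ y' z' : ℤ, 1 ≤ y' → y' ≤ (h:ℤ) → 1 ≤ z' → z' ≤ (Z:ℤ) →
          (z₀ - z').toNat + (z' - (z₀ + c - 1)).toNat ≤ d → ((x, y', z'):V3) ∈ T := by
        intro d
        induction d with
        | zero =>
          intro y' z' h1 h2 h3 h4 hd
          exact rows ((y₀ - y').toNat + (y' - (y₀ + b - 1)).toNat) y' z' h1 h2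
            (by omega) (by omega) le_rfl
        | succ d ihd =>
          intro y' z' h1 h2 h3 h4 hd
          by_cases hin : (z₀ - z').toNat + (z' - (z₀ + c - 1)).toNat ≤ d
          · exact ihd y' z' h1 h2 h3 h4 hin
          · have hdom' := memdom x y' z' (by omega) (by omega) h1 (by omega) h3 (by omega)
            by_cases hside : z₀ + c - 1 < z'
            · apply infect3 x y' z' hdom' (-1) 1 (-1) (Or.inr rfl) (Or.inl rfl) (Or.inr rfl)
                a 0 c le_rfl (by omega) le_rfl (by omega)
              · intro k hk1 hk2
                have he : x + (-1)*k = x - k := by ring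
                rw [he]
                exact hleft (x-k) y' z' (by omega) (by omega) h1 h2 h3 h4
              · intro k hk1 hk2; exfalso; omega
              · intro k hk1 hk2
                have he : z' + (-1)*k = z' - k := by ring
                rw [he]
                exact ihd y' (z'-k) h1 h2 (by omega) (by omega) (by omega)
            · apply infect3 x y' z' hdom' (-1) 1 1 (Or.inr rfl) (Or.inl rfl) (Or.inl rfl)
                a 0 c le_rfl (by omega) le_rfl (by omega)
              · intro k hk1 hk2
                have he : x + (-1)*k = x - k := by ring
                rw [he]
                exact hleft (x-k) y' z' (by omega) (by omega) h1 h2 h3 h4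
              · intro k hk1 hk2; exfalso; omega
              · intro k hk1 hk2
                have he : z' + 1*k = z' + k := by ring
                rw [he]
                exact ihd y' (z'+k) h1 h2 (by omega) (by omega) (by omega)
      exact plane ((z₀ - z).toNat + (z - (z₀ + c - 1)).toNat) y z hy1 hyh hz1 hzZ le_rfl
  -- Stage 3: fill [1,L] × [1,L] × [1,Z]
  have C3 : ∀ n : ℕ, ∀ x y z : ℤ, 1 ≤ x → x ≤ (L:ℤ) → 1 ≤ y → y ≤ (L:ℤ) →
      1 ≤ z → z ≤ (Z:ℤ) → y.toNat ≤ n → ((x,y,z):V3) ∈ T := by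
    intro n
    induction n using Nat.strong_induction_on with
    | _ n IH =>
    intro x y z hx1 hxL hy1 hyL hz1 hzZ hyn
    by_cases hyh : y ≤ (h:ℤ)
    · exact C2 x.toNat x y z hx1 hxL hy1 hyh hz1 hzZ le_rfl
    · push_neg at hyh
      obtain ⟨x₀, z₀, hx₀1, hx₀L, hz₀1, hz₀Z, hblk⟩ := g3 y hyh hyL
      have hdown : ∀ x' y' z' : ℤ, 1 ≤ x' → x' ≤ (L:ℤ) → 1 ≤ y' → y' < y →
          1 ≤ z' → z' ≤ (Z:ℤ) → ((x',y',z'):V3) ∈ T := by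
        intro x' y' z' h1 h2 h3 h4 h5 h6
        exact IH (n-1) (by omega) x' y' z' h1 h2 h3 (by omega) h5 h6 (by omega)
      have rows : ∀ d : ℕ, ∀ x' z' : ℤ, 1 ≤ x' → x' ≤ (L:ℤ) → z₀ ≤ z' → z' < z₀ + c →
          (x₀ - x').toNat + (x' - (x₀ + a - 1)).toNat ≤ d → ((x', y, z'):V3) ∈ T := by
        intro d
        induction d with
        | zero =>
          intro x' z' h1 h2 h3 h4 hd
          exact memA x' y z' (hblk x' z' (by omega) (by omega) h3 h4)
            h1 (by omega) (by omega) (by omega) (by omega) (by omega)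
        | succ d ihd =>
          intro x' z' h1 h2 h3 h4 hd
          by_cases hin : (x₀ - x').toNat + (x' - (x₀ + a - 1)).toNat ≤ d
          · exact ihd x' z' h1 h2 h3 h4 hin
          · have hdom' := memdom x' y z' h1 (by omega) (by omega) (by omega) (by omega) (by omega)
            by_cases hside : x₀ + a - 1 < x'
            · apply infect3 x' y z' hdom' (-1) (-1) 1 (Or.inr rfl) (Or.inr rfl) (Or.inl rfl)
                a b 0 le_rfl le_rfl (by omega) (by omega)
              · intro k hk1 hk2
                have he : x' + (-1)*k = x' - k := by ring
                rw [he]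
                exact ihd (x'-k) z' (by omega) (by omega) h3 h4 (by omega)
              · intro k hk1 hk2
                have he : y + (-1)*k = y - k := by ring
                rw [he]
                exact hdown x' (y-k) z' h1 h2 (by omega) (by omega) (by omega) (by omega)
              · intro k hk1 hk2; exfalso; omega
            · apply infect3 x' y z' hdom' 1 (-1) 1 (Or.inl rfl) (Or.inr rfl) (Or.inl rfl)
                a b 0 le_rfl le_rfl (by omega) (by omega)
              · intro k hk1 hk2
                have he : x' + 1*k = x' + k := by ring
                rw [he]
                exact ihd (x'+k) z' (by omega) (by omega) h3 h4 (by omega)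
              · intro k hk1 hk2
                have he : y + (-1)*k = y - k := by ring
                rw [he]
                exact hdown x' (y-k) z' h1 h2 (by omega) (by omega) (by omega) (by omega)
              · intro k hk1 hk2; exfalso; omega
      have plane : ∀ d : ℕ, ∀ x' z' : ℤ, 1 ≤ x' → x' ≤ (L:ℤ) → 1 ≤ z' → z' ≤ (Z:ℤ) →
          (z₀ - z').toNat + (z' - (z₀ + c - 1)).toNat ≤ d → ((x', y, z'):V3) ∈ T := by
        intro d
        induction d with
        | zero =>
          intro x' z' h1 h2 h3 h4 hd
          exact rows ((x₀ - x').toNat + (x' - (x₀ + a - 1)).toNat) x' z' h1 h2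
            (by omega) (by omega) le_rfl
        | succ d ihd =>
          intro x' z' h1 h2 h3 h4 hd
          by_cases hin : (z₀ - z').toNat + (z' - (z₀ + c - 1)).toNat ≤ d
          · exact ihd x' z' h1 h2 h3 h4 hin
          · have hdom' := memdom x' y z' h1 (by omega) (by omega) (by omega) h3 (by omega)
            by_cases hside : z₀ + c - 1 < z'
            · apply infect3 x' y z' hdom' 1 (-1) (-1) (Or.inl rfl) (Or.inr rfl) (Or.inr rfl)
                0 b c (by omega) le_rfl le_rfl (by omega)
              · intro k hk1 hk2; exfalso; omega
              · intro k hk1 hk2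
                have he : y + (-1)*k = y - k := by ring
                rw [he]
                exact hdown x' (y-k) z' h1 h2 (by omega) (by omega) h3 h4
              · intro k hk1 hk2
                have he : z' + (-1)*k = z' - k := by ring
                rw [he]
                exact ihd x' (z'-k) h1 h2 (by omega) (by omega) (by omega)
            · apply infect3 x' y z' hdom' 1 (-1) 1 (Or.inl rfl) (Or.inr rfl) (Or.inl rfl)
                0 b c (by omega) le_rfl le_rfl (by omega)
              · intro k hk1 hk2; exfalso; omega
              · intro k hk1 hk2
                have he : y + (-1)*k = y - k := by ring
                rw [he]
                exact hdown x' (y-k) z' h1 h2 (by omega) (by omega) h3 h4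
              · intro k hk1 hk2
                have he : z' + 1*k = z' + k := by ring
                rw [he]
                exact ihd x' (z'+k) h1 h2 (by omega) (by omega) (by omega)
      exact plane ((z₀ - z).toNat + (z - (z₀ + c - 1)).toNat) x z hx1 hxL hz1 hzZ le_rfl
  -- Stage 4: fill [1,L]^3
  have C4 : ∀ n : ℕ, ∀ x y z : ℤ, 1 ≤ x → x ≤ (L:ℤ) → 1 ≤ y → y ≤ (L:ℤ) →
      1 ≤ z → z ≤ (L:ℤ) → z.toNat ≤ n → ((x,y,z):V3) ∈ T := by
    intro n
    induction n using Nat.strong_induction_on with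
    | _ n IH =>
    intro x y z hx1 hxL hy1 hyL hz1 hzL hzn
    by_cases hzZ : z ≤ (Z:ℤ)
    · exact C3 y.toNat x y z hx1 hxL hy1 hyL hz1 hzZ le_rfl
    · push_neg at hzZ
      obtain ⟨v, hvA, ⟨hv11, hv12⟩, ⟨hv21, hv22⟩, hv3⟩ := g4 z hzZ hzL
      obtain ⟨xs, ys, zs⟩ := v
      simp only at hv11 hv12 hv21 hv22 hv3
      rw [hv3] at hvA
      have below : ∀ x' y' : ℤ, 1 ≤ x' → x' ≤ (L:ℤ) → 1 ≤ y' → y' ≤ (L:ℤ) →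
          ∀ k : ℤ, 1 ≤ k → k ≤ (c:ℤ) → ((x', y', z - k):V3) ∈ T := by
        intro x' y' h1 h2 h3 h4 k hk1 hk2
        by_cases hzk : z - k ≤ (Z:ℤ)
        · exact C3 y'.toNat x' y' (z-k) h1 h2 h3 h4 (by omega) hzk le_rfl
        · exact IH (n-1) (by omega) x' y' (z-k) h1 h2 h3 h4 (by omega) (by omega) (by omega)
      have inner : ∀ d : ℕ, ∀ x' y' : ℤ, 1 ≤ x' → x' ≤ (L:ℤ) → 1 ≤ y' → y' ≤ (L:ℤ) →
          (x' - xs).natAbs + (y' - ys).natAbs ≤ d → ((x', y', z):V3) ∈ T := by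
        intro d
        induction d with
        | zero =>
          intro x' y' h1 h2 h3 h4 hd
          have hx : x' = xs := by omega
          have hy : y' = ys := by omega
          rw [hx, hy]
          exact memA xs ys z hvA (by omega) (by omega) (by omega) (by omega) (by omega) (by omega)
        | succ d ihd =>
          intro x' y' h1 h2 h3 h4 hd
          by_cases hin : (x' - xs).natAbs + (y' - ys).natAbs ≤ d
          · exact ihd x' y' h1 h2 h3 h4 hin
          · have hdom' := memdom x' y' z h1 h2 h3 h4 (by omega) (by omega)
            rcases lt_trichotomy x' xs with hlt | heq | hgt
            · apply infect3 x' y' z hdom' 1 1 (-1) (Or.inl rfl) (Or.inl rfl) (Or.inr rfl)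
                1 0 c (by omega) (by omega) le_rfl (by omega)
              · intro k hk1 hk2
                have hk : k = 1 := by omega
                subst hk
                have he : x' + 1*1 = x' + 1 := by ring
                rw [he]
                exact ihd (x'+1) y' (by omega) (by omega) h3 h4 (by omega)
              · intro k hk1 hk2; exfalso; omega
              · intro k hk1 hk2
                have he : z + (-1)*k = z - k := by ring
                rw [he]
                exact below x' y' h1 h2 h3 h4 k hk1 hk2
            · subst heq
              rcases lt_trichotomy y' ys with hylt | hyeq | hygt
              · apply infect3 x' y' z hdom' 1 1 (-1) (Or.inl rfl) (Or.inl rfl) (Or.inr rfl)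
                  0 1 c (by omega) (by omega) le_rfl (by omega)
                · intro k hk1 hk2; exfalso; omega
                · intro k hk1 hk2
                  have hk : k = 1 := by omega
                  subst hk
                  have he : y' + 1*1 = y' + 1 := by ring
                  rw [he]
                  exact ihd x' (y'+1) h1 h2 (by omega) (by omega) (by omega)
                · intro k hk1 hk2
                  have he : z + (-1)*k = z - k := by ring
                  rw [he]
                  exact below x' y' h1 h2 h3 h4 k hk1 hk2
              · exfalso; omega
              · apply infect3 x' y' z hdom' 1 (-1) (-1) (Or.inl rfl) (Or.inr rfl) (Or.inr rfl)
                  0 1 c (by omega) (by omega) le_rfl (by omega)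
                · intro k hk1 hk2; exfalso; omega
                · intro k hk1 hk2
                  have hk : k = 1 := by omega
                  subst hk
                  have he : y' + (-1)*1 = y' - 1 := by ring
                  rw [he]
                  exact ihd x' (y'-1) h1 h2 (by omega) (by omega) (by omega)
                · intro k hk1 hk2
                  have he : z + (-1)*k = z - k := by ring
                  rw [he]
                  exact below x' y' h1 h2 h3 h4 k hk1 hk2
            · apply infect3 x' y' z hdom' (-1) 1 (-1) (Or.inr rfl) (Or.inl rfl) (Or.inr rfl)
                1 0 c (by omega) (by omega) le_rfl (by omega)
              · intro k hk1 hk2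
                have hk : k = 1 := by omega
                subst hk
                have he : x' + (-1)*1 = x' - 1 := by ring
                rw [he]
                exact ihd (x'-1) y' (by omega) (by omega) h3 h4 (by omega)
              · intro k hk1 hk2; exfalso; omega
              · intro k hk1 hk2
                have he : z + (-1)*k = z - k := by ring
                rw [he]
                exact below x' y' h1 h2 h3 h4 k hk1 hk2
      exact inner ((x - xs).natAbs + (y - ys).natAbs) x y hx1 hxL hy1 hyL le_rfl
  intro v hv
  obtain ⟨x, y, z⟩ := v
  rw [mem_rect] at hv
  exact C4 z.toNat x y z hv.1.1 hv.1.2 hv.2.1.1 hv.2.1.2 hv.2.2.1 hv.2.2.2 le_rfl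


-- extra helpers for the final assembly
noncomputable def layerF (m : ℕ) (z : ℤ) : Finset V3 :=
  Finset.Icc (1:ℤ) (m:ℤ) ×ˢ (Finset.Icc (1:ℤ) (m:ℤ) ×ˢ ({z} : Finset ℤ))

lemma mem_layerF {m : ℕ} {z : ℤ} {v : V3} :
    v ∈ layerF m z ↔ (1 ≤ v.1 ∧ v.1 ≤ (m:ℤ)) ∧ (1 ≤ v.2.1 ∧ v.2.1 ≤ (m:ℤ)) ∧ v.2.2 = z := by
  obtain ⟨v1, v2, v3⟩ := v
  simp only [layerF, Finset.mem_product, Finset.mem_Icc, Finset.mem_singleton]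

lemma layerF_card (m : ℕ) (z : ℤ) : (layerF m z).card = m * m := by
  simp only [layerF, Finset.card_product, Int.card_Icc, Finset.card_singleton]
  have e1 : (m:ℤ) + 1 - 1 = (m:ℤ) := by ring
  rw [e1, Int.toNat_natCast]
  ring

noncomputable def blockXF (b c : ℕ) (x : ℤ) (i j : ℕ) : Finset V3 :=
  ({x} : Finset ℤ) ×ˢ (Finset.Icc ((i:ℤ)*b+1) ((i:ℤ)*b+b) ×ˢ Finset.Icc ((j:ℤ)*c+1) ((j:ℤ)*c+c))

lemma mem_blockXF {b c : ℕ} {x : ℤ} {i j : ℕ} {v : V3} :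
    v ∈ blockXF b c x i j ↔ v.1 = x ∧ ((i:ℤ)*b+1 ≤ v.2.1 ∧ v.2.1 ≤ (i:ℤ)*b+b) ∧
      ((j:ℤ)*c+1 ≤ v.2.2 ∧ v.2.2 ≤ (j:ℤ)*c+c) := by
  obtain ⟨v1, v2, v3⟩ := v
  simp only [blockXF, Finset.mem_product, Finset.mem_Icc, Finset.mem_singleton]

lemma blockXF_card (b c : ℕ) (x : ℤ) (i j : ℕ) : (blockXF b c x i j).card = b * c := by
  simp only [blockXF, Finset.card_product, Int.card_Icc, Finset.card_singleton, one_mul]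
  have e1 : (i:ℤ)*b+b+1 - ((i:ℤ)*b+1) = (b:ℤ) := by ring
  have e2 : (j:ℤ)*c+c+1 - ((j:ℤ)*c+1) = (c:ℤ) := by ring
  rw [e1, e2, Int.toNat_natCast, Int.toNat_natCast]

noncomputable def blockYF (a c : ℕ) (y : ℤ) (i j : ℕ) : Finset V3 :=
  Finset.Icc ((i:ℤ)*a+1) ((i:ℤ)*a+a) ×ˢ (({y} : Finset ℤ) ×ˢ Finset.Icc ((j:ℤ)*c+1) ((j:ℤ)*c+c))

lemma mem_blockYF {a c : ℕ} {y : ℤ} {i j : ℕ} {v : V3} :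
    v ∈ blockYF a c y i j ↔ ((i:ℤ)*a+1 ≤ v.1 ∧ v.1 ≤ (i:ℤ)*a+a) ∧ v.2.1 = y ∧
      ((j:ℤ)*c+1 ≤ v.2.2 ∧ v.2.2 ≤ (j:ℤ)*c+c) := by
  obtain ⟨v1, v2, v3⟩ := v
  simp only [blockYF, Finset.mem_product, Finset.mem_Icc, Finset.mem_singleton]

lemma blockYF_card (a c : ℕ) (y : ℤ) (i j : ℕ) : (blockYF a c y i j).card = a * c := by
  simp only [blockYF, Finset.card_product, Int.card_Icc, Finset.card_singleton, one_mul]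
  have e1 : (i:ℤ)*a+a+1 - ((i:ℤ)*a+1) = (a:ℤ) := by ring
  have e2 : (j:ℤ)*c+c+1 - ((j:ℤ)*c+1) = (c:ℤ) := by ring
  rw [e1, e2, Int.toNat_natCast, Int.toNat_natCast]

lemma lt_of_sq_lt_sq' {x t : ℝ} (hx : 0 ≤ x) (h : t*t < x*x) (ht : 0 ≤ t) : t < x := by
  nlinarith

lemma one_le_of_sq {x : ℝ} (hx : 0 ≤ x) (h : 1 ≤ x*x) : 1 ≤ x := by
  nlinarith

lemma nat_div_lb (n d : ℕ) (hd : 0 < d) (h2 : 2*d ≤ n) :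
    (n:ℝ)/(2*(d:ℝ)) ≤ ((n/d : ℕ):ℝ) := by
  have h1 : d * (n/d) + n % d = n := Nat.div_add_mod n d
  have h2' : n % d < d := Nat.mod_lt n hd
  have h3 : n < d * (n/d) + d := by
    calc n = d*(n/d) + n % d := h1.symm
      _ < d*(n/d) + d := by exact Nat.add_lt_add_left h2' _
  have h3' : (n:ℝ) < (d:ℝ) * ((n/d : ℕ):ℝ) + d := by exact_mod_cast h3
  have hd' : (0:ℝ) < (d:ℝ) := Nat.cast_pos.mpr hd
  have h2'' : 2*(d:ℝ) ≤ (n:ℝ) := by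
    have := (Nat.cast_le (α := ℝ)).mpr h2
    push_cast at this
    linarith
  rw [div_le_iff₀ (by positivity)]
  nlinarith [show (0:ℝ) ≤ ((n/d : ℕ):ℝ) from Nat.cast_nonneg _]

lemma exp_quad {x : ℝ} (hx : 0 ≤ x) : x^2/4 ≤ Real.exp x := by
  have h1 : x/2 + 1 ≤ Real.exp (x/2) := Real.add_one_le_exp (x/2)
  have h2 : Real.exp x = Real.exp (x/2) * Real.exp (x/2) := by
    rw [← Real.exp_add]; ring_nf
  nlinarith [Real.exp_pos (x/2)]

lemma one_sub_pow_le_exp {x : ℝ} (hx0 : 0 ≤ x) (hx1 : x ≤ 1) (M : ℕ) :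
    (1 - x)^M ≤ Real.exp (-((M:ℝ) * x)) := by
  have h1 : 1 - x ≤ Real.exp (-x) := by
    have := Real.add_one_le_exp (-x); linarith
  calc (1-x)^M ≤ (Real.exp (-x))^M := pow_le_pow_left₀ (by linarith) h1 M
    _ = Real.exp (-((M:ℝ)*x)) := by rw [← Real.exp_nat_mul]; ring_nf

lemma rect_subset_rect {m n k m' n' k' : ℕ} (h1 : m ≤ m') (h2 : n ≤ n') (h3 : k ≤ k') :
    rect m n k ⊆ rect m' n' k' := by
  intro v hv
  rw [mem_rect] at *
  have c1 : (m:ℤ) ≤ m' := by exact_mod_cast h1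
  have c2 : (n:ℤ) ≤ n' := by exact_mod_cast h2
  have c3 : (k:ℤ) ≤ k' := by exact_mod_cast h3
  omega


lemma block_interval_disj {i i' m : ℕ} (hne : i ≠ i') {u : ℤ}
    (h1 : (i:ℤ)*m+1 ≤ u) (h2 : u ≤ (i:ℤ)*m+m)
    (h1' : (i':ℤ)*m+1 ≤ u) (h2' : u ≤ (i':ℤ)*m+m) : False := by
  rcases Nat.lt_or_ge i i' with hlt | hge
  · have hx : (i+1)*m ≤ i'*m := Nat.mul_le_mul_right m hlt
    have hx' : ((i:ℤ)+1)*(m:ℤ) ≤ (i':ℤ)*(m:ℤ) := by exact_mod_cast hx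
    have e : ((i:ℤ)+1)*(m:ℤ) = (i:ℤ)*m + m := by ring
    linarith only [hx', e, h2, h1']
  · have hlt' : i' < i := by omega
    have hx : (i'+1)*m ≤ i*m := Nat.mul_le_mul_right m hlt'
    have hx' : ((i':ℤ)+1)*(m:ℤ) ≤ (i:ℤ)*(m:ℤ) := by exact_mod_cast hx
    have e : ((i':ℤ)+1)*(m:ℤ) = (i':ℤ)*m + m := by ring
    linarith only [hx', e, h2', h1]

set_option maxHeartbeats 4000000 in
/-- **Lemma 2.4.** For `c ∈ {b+1, …, a+b−1}` and `N_{c+1}^{a,b,c}`-bootstrap percolation: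
for a sufficiently large constant `Γ > 0`, with `h = c p^{-1/2} (log(1/p))^{1/2}`,
`R₁ = [h]²×[c]` and `L = exp(Γ p^{-1/2} (log(1/p))^{3/2})` (rounded to integers), the
conditional probability `ℙ_p(I•([L]³) | I•(R₁))` tends to `1` as `p → 0`. -/
theorem statement5 (a b c : ℕ) (ha : 1 ≤ a) (hab : a ≤ b) (hbc : b < c) (hcab : c < a + b) :
    ∃ Γ₀ : ℝ, 0 < Γ₀ ∧ ∀ Γ : ℝ, Γ₀ ≤ Γ → ∀ ε : ℝ, 0 < ε → ∃ p₀ : ℝ, 0 < p₀ ∧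
      ∀ p : ℝ, 0 < p → p < p₀ → ∀ h L : ℕ,
        h = ⌈(c : ℝ) * p ^ (-(1 : ℝ) / 2) * Real.log (1 / p) ^ ((1 : ℝ) / 2)⌉₊ →
        L = ⌈Real.exp (Γ * p ^ (-(1 : ℝ) / 2) * Real.log (1 / p) ^ ((3 : ℝ) / 2))⌉₊ →
        1 - ε < PPc (rectF L L L) p
          (IFill a b c (c + 1) (rect L L L))
          (IFill a b c (c + 1) (rect h h c)) := by
  
  have ha2 : 2 ≤ a := by omega
  have hb2 : 2 ≤ b := by omega
  have hc3 : 3 ≤ c := by omega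
  refine ⟨(b:ℝ)*(c:ℝ) + 10, by positivity, ?_⟩
  intro Γ hΓ ε hε
  have hbcR : (0:ℝ) ≤ (b:ℝ)*(c:ℝ) := by positivity
  have hΓ0 : (0:ℝ) < Γ := by linarith only [hΓ, hbcR]
  have haR : (2:ℝ) ≤ (a:ℝ) := by exact_mod_cast ha2
  have hbR : (2:ℝ) ≤ (b:ℝ) := by exact_mod_cast hb2
  have hcR : (3:ℝ) ≤ (c:ℝ) := by exact_mod_cast hc3
  set K : ℝ := (4*(b:ℝ)*(c:ℝ)*(Γ+2))^2 + 64*(a:ℝ)^2*(c:ℝ)^2 + 4*(b:ℝ)^2 + 2*(c:ℝ) + 100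
    with hKdef
  have hT1nn : (0:ℝ) ≤ (4*(b:ℝ)*(c:ℝ)*(Γ+2))^2 := sq_nonneg _
  have hT2nn : (0:ℝ) ≤ 64*(a:ℝ)^2*(c:ℝ)^2 := by positivity
  have hT3nn : (0:ℝ) ≤ 4*(b:ℝ)^2 := by positivity
  have hT4nn : (0:ℝ) ≤ 2*(c:ℝ) := by positivity
  have hKpos : (0:ℝ) < K := by rw [hKdef]; linarith only [hT1nn, hT2nn, hT3nn, hT4nn]
  refine ⟨min (ε/16) (1/K), lt_min (by positivity) (by positivity), ?_⟩
  intro p hp0 hpm h L hh hL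
  have hpε : p < ε/16 := lt_of_lt_of_le hpm (min_le_left _ _)
  have hpK : p < 1/K := lt_of_lt_of_le hpm (min_le_right _ _)
  have h100K : (100:ℝ) ≤ K := by rw [hKdef]; linarith only [hT1nn, hT2nn, hT3nn, hT4nn]
  have hp1 : p < 1 := by
    have h1 : 1/K ≤ 1 := by rw [div_le_one hKpos]; linarith only [h100K]
    linarith only [hpK, h1]
  -- basic quantities
  obtain ⟨q, hqdef⟩ : ∃ x : ℝ, x = 1/p := ⟨_, rfl⟩
  have hq0 : 0 < q := by rw [hqdef]; positivity
  have hpq1 : p * q = 1 := by rw [hqdef]; field_simp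
  have hKq : K < q := by
    rw [hqdef, lt_div_iff₀ hp0]
    calc K * p < K * (1/K) := by exact mul_lt_mul_of_pos_left hpK hKpos
      _ = 1 := by field_simp
  have hq100 : 100 < q := by linarith only [hKq, h100K]
  have hq1 : 1 < q := by linarith only [hq100]
  have hq_2c : 2*(c:ℝ) < q := by
    have hX : 2*(c:ℝ) ≤ K := by rw [hKdef]; linarith only [hT1nn, hT2nn, hT3nn]
    linarith only [hX, hKq]
  have hq_4b2 : 4*(b:ℝ)^2 < q := by
    have hX : 4*(b:ℝ)^2 ≤ K := by rw [hKdef]; linarith only [hT1nn, hT2nn, hT4nn]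
    linarith only [hX, hKq]
  have hq_k1 : (4*(b:ℝ)*(c:ℝ)*(Γ+2))^2 < q := by
    have hX : (4*(b:ℝ)*(c:ℝ)*(Γ+2))^2 ≤ K := by
      rw [hKdef]; linarith only [hT2nn, hT3nn, hT4nn]
    linarith only [hX, hKq]
  have hq_ac : 64*(a:ℝ)^2*(c:ℝ)^2 < q := by
    have hX : 64*(a:ℝ)^2*(c:ℝ)^2 ≤ K := by
      rw [hKdef]; linarith only [hT1nn, hT3nn, hT4nn]
    linarith only [hX, hKq]
  obtain ⟨l, hldef⟩ : ∃ x : ℝ, x = Real.log (1/p) := ⟨_, rfl⟩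
  have hlq' : Real.log q = l := by rw [hldef, hqdef]
  have hl1 : 1 ≤ l := by
    have he1 : Real.exp 1 ≤ q := by
      have h9 := Real.exp_one_lt_d9
      linarith only [h9, hq100]
    calc (1:ℝ) = Real.log (Real.exp 1) := (Real.log_exp 1).symm
      _ ≤ Real.log q := Real.log_le_log (Real.exp_pos 1) he1
      _ = l := hlq'
  have hl0 : 0 < l := by linarith only [hl1]
  have hlq : l ≤ q := by
    have hX := Real.log_le_sub_one_of_pos hq0
    rw [hlq'] at hX
    linarith only [hX]
  have hexpl : Real.exp l = q := by rw [← hlq']; exact Real.exp_log hq0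
  obtain ⟨qh, hqhdef⟩ : ∃ x : ℝ, x = q ^ ((1:ℝ)/2) := ⟨_, rfl⟩
  have hqh0 : 0 < qh := by rw [hqhdef]; exact Real.rpow_pos_of_pos hq0 _
  have hqh2 : qh * qh = q := by
    rw [hqhdef, ← Real.rpow_add hq0]; norm_num
  have hqh1 : 1 ≤ qh := one_le_of_sq hqh0.le (by rw [hqh2]; linarith only [hq1])
  have hqhq : qh ≤ q := by
    have h' := mul_le_mul_of_nonneg_left hqh1 hqh0.le
    rw [mul_one, hqh2] at h'
    exact h'
  obtain ⟨lh, hlhdef⟩ : ∃ x : ℝ, x = l ^ ((1:ℝ)/2) := ⟨_, rfl⟩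
  have hlh0 : 0 < lh := by rw [hlhdef]; exact Real.rpow_pos_of_pos hl0 _
  have hlh2 : lh * lh = l := by
    rw [hlhdef, ← Real.rpow_add hl0]; norm_num
  have hlh1 : 1 ≤ lh := one_le_of_sq hlh0.le (by rw [hlh2]; linarith only [hl1])
  have hlhqh : lh ≤ qh := by
    have hX : l ^ ((1:ℝ)/2) ≤ q ^ ((1:ℝ)/2) := Real.rpow_le_rpow hl0.le hlq (by norm_num)
    rw [← hlhdef, ← hqhdef] at hX
    exact hX
  have hpm12 : p ^ (-(1:ℝ)/2) = qh := by
    have h1 : (1/p : ℝ) = p⁻¹ := one_div p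
    rw [hqhdef, hqdef, h1, Real.inv_rpow hp0.le, ← Real.rpow_neg hp0.le]
    congr 1
    norm_num
  -- bounds on h
  have hXnn : (0:ℝ) ≤ (c:ℝ) * p ^ (-(1:ℝ)/2) * Real.log (1/p) ^ ((1:ℝ)/2) := by
    rw [hpm12, ← hldef, ← hlhdef]
    positivity
  have hXval : (c:ℝ) * p ^ (-(1:ℝ)/2) * Real.log (1/p) ^ ((1:ℝ)/2) = (c:ℝ) * qh * lh := by
    rw [hpm12, ← hldef, ← hlhdef]
  have hhlow : (c:ℝ) * qh * lh ≤ (h:ℝ) := by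
    rw [hh, ← hXval]
    exact Nat.le_ceil _
  have hhup : (h:ℝ) < (c:ℝ) * qh * lh + 1 := by
    rw [hh, ← hXval]
    exact Nat.ceil_lt_add_one hXnn
  -- bounds on L
  obtain ⟨lam, hlamdef⟩ : ∃ x : ℝ, x = Γ * qh * (l * lh) := ⟨_, rfl⟩
  have hlamval : Γ * p ^ (-(1:ℝ)/2) * Real.log (1/p) ^ ((3:ℝ)/2) = lam := by
    rw [hlamdef, hpm12, ← hldef]
    have h32 : l ^ ((3:ℝ)/2) = l * lh := by
      rw [hlhdef]
      rw [show ((3:ℝ)/2) = 1 + (1:ℝ)/2 by norm_num, Real.rpow_add hl0, Real.rpow_one]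
    rw [h32]
  have hlam0 : 0 < lam := by rw [hlamdef]; positivity
  have hLlow : Real.exp lam ≤ (L:ℝ) := by
    rw [hL, ← hlamval]
    exact Nat.le_ceil _
  have hLup : (L:ℝ) < Real.exp lam + 1 := by
    rw [hL, ← hlamval]
    exact Nat.ceil_lt_add_one (Real.exp_pos _).le
  have hlam_le : lam ≤ Γ * (q*q) := by
    have s1 : l * lh ≤ q * qh := mul_le_mul hlq hlhqh hlh0.le hq0.le
    have s2 : qh * (l*lh) ≤ qh * (q*qh) := mul_le_mul_of_nonneg_left s1 hqh0.le
    have s3 : qh * (q*qh) = q * (qh*qh) := by ring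
    rw [hqh2] at s3
    have s4 : qh * (l*lh) ≤ q * q := by linarith only [s2, s3]
    calc lam = Γ * (qh * (l * lh)) := by rw [hlamdef]; ring
      _ ≤ Γ * (q * q) := mul_le_mul_of_nonneg_left s4 hΓ0.le
  have hlam_ge : Γ * l ≤ lam := by
    have s1 : 1 * (l * 1) ≤ qh * (l * lh) := by
      apply mul_le_mul hqh1 _ (by positivity) hqh0.le
      exact mul_le_mul_of_nonneg_left hlh1 hl0.le
    rw [mul_one] at s1
    rw [one_mul] at s1
    calc Γ * l ≤ Γ * (qh * (l * lh)) := mul_le_mul_of_nonneg_left s1 hΓ0.le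
      _ = lam := by rw [hlamdef]; ring
  -- Z
  obtain ⟨Z, hZdef⟩ : ∃ m : ℕ, m = ⌈q ^ (b*c+2)⌉₊ := ⟨_, rfl⟩
  have hqbc0 : (0:ℝ) < q ^ (b*c+2) := by positivity
  have hZlow : q ^ (b*c+2) ≤ (Z:ℝ) := by rw [hZdef]; exact Nat.le_ceil _
  have hZup : (Z:ℝ) < q ^ (b*c+2) + 1 := by rw [hZdef]; exact Nat.ceil_lt_add_one hqbc0.le
  have hqbc1 : (1:ℝ) ≤ q ^ (b*c+2) := one_le_pow₀ hq1.le
  -- nat size facts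
  have hq_le_pow : ∀ m : ℕ, 1 ≤ m → q ≤ q ^ m := by
    intro m hm
    calc q = q^1 := (pow_one q).symm
      _ ≤ q^m := pow_le_pow_right₀ hq1.le hm
  have hqh_h : qh ≤ (h:ℝ) := by
    have s1 : 1 * (qh * 1) ≤ (c:ℝ) * (qh * lh) := by
      apply mul_le_mul (by linarith only [hcR]) _ (by positivity) (by positivity)
      exact mul_le_mul_of_nonneg_left hlh1 hqh0.le
    have s2 : (c:ℝ) * (qh * lh) = (c:ℝ) * qh * lh := by ring
    rw [mul_one, one_mul, s2] at s1
    linarith only [s1, hhlow]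
  have h2bqh : 2*(b:ℝ) < qh := by
    apply lt_of_sq_lt_sq' hqh0.le _ (by linarith only [hbR])
    rw [hqh2]
    calc 2*(b:ℝ) * (2*(b:ℝ)) = 4*(b:ℝ)^2 := by ring
      _ < q := hq_4b2
  have h2bh : 2*b ≤ h := by
    have hX : ((2*b : ℕ):ℝ) ≤ (h:ℝ) := by
      push_cast
      linarith only [h2bqh, hqh_h]
    exact_mod_cast hX
  have hbh : b ≤ h := by omega
  have h1h : 1 ≤ h := by omega
  have h2cZ : 2*c ≤ Z := by
    have hX : ((2*c:ℕ):ℝ) ≤ (Z:ℝ) := by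
      push_cast
      have s1 : q ≤ q^(b*c+2) := hq_le_pow _ (by omega)
      linarith only [hq_2c, s1, hZlow]
    exact_mod_cast hX
  have hcZ : c ≤ Z := by omega
  have hbc4 : 4 ≤ b*c := by
    have : 2*3 ≤ b*c := Nat.mul_le_mul hb2 (by omega)
    omega
  have hqL : q ^ (b*c+3) ≤ (L:ℝ) := by
    have s1 : Real.exp (Γ * l) ≤ Real.exp lam := Real.exp_le_exp.mpr hlam_ge
    have s2 : Real.exp (Γ * l) = q ^ (Γ:ℝ) := by
      rw [Real.rpow_def_of_pos hq0, hlq']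
      ring_nf
    have s3 : q ^ (((b*c+3:ℕ)):ℝ) ≤ q ^ (Γ:ℝ) := by
      apply Real.rpow_le_rpow_of_exponent_le hq1.le
      push_cast
      linarith only [hΓ]
    have s4 : q ^ (((b*c+3:ℕ)):ℝ) = q ^ (b*c+3) := Real.rpow_natCast q _
    calc q ^ (b*c+3) = q ^ (((b*c+3:ℕ)):ℝ) := s4.symm
      _ ≤ q ^ (Γ:ℝ) := s3
      _ = Real.exp (Γ * l) := s2.symm
      _ ≤ Real.exp lam := s1
      _ ≤ (L:ℝ) := hLlow
  have hZL : Z ≤ L := by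
    have hr : (Z:ℝ) < (L:ℝ) := by
      have heq : q ^ (b*c+3) = q ^ (b*c+2) * q := by rw [pow_succ]
      have s1 : q ^ (b*c+2) * 2 ≤ q ^ (b*c+2) * q :=
        mul_le_mul_of_nonneg_left (by linarith only [hq100]) (by positivity)
      linarith only [hZup, hqL, heq, s1, hqbc1]
    exact (Nat.cast_lt.mp hr).le
  have hq3L : q^3 + 1 ≤ (L:ℝ) := by
    have h33 : (1:ℝ) ≤ q^3 := one_le_pow₀ hq1.le
    have h34 : q^3 + 1 ≤ q^4 := by
      have heq : q^4 = q^3 * q := by ring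
      have s1 : q^3 * 2 ≤ q^3 * q :=
        mul_le_mul_of_nonneg_left (by linarith only [hq100]) (by positivity)
      linarith only [heq, s1, h33]
    have h4bc : q^4 ≤ q^(b*c+3) := pow_le_pow_right₀ hq1.le (by omega)
    linarith only [h34, h4bc, hqL]
  have hc_q : (c:ℝ) ≤ q := by linarith only [hq_2c, hcR]
  have hhL : h ≤ L := by
    have hr : (h:ℝ) < (L:ℝ) := by
      have s1 : (c:ℝ) * qh ≤ q * q := mul_le_mul hc_q hqhq hqh0.le hq0.le
      have s2 : (c:ℝ) * qh * lh ≤ (q*q) * q :=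
        mul_le_mul s1 (le_trans hlhqh hqhq) hlh0.le (by positivity)
      have hq3 : q^3 = q*q*q := by ring
      linarith only [hhup, s2, hq3, hq3L]
    exact (Nat.cast_lt.mp hr).le
  have h1L : 1 ≤ L := by omega
  have hLr1 : (1:ℝ) ≤ (L:ℝ) := by exact_mod_cast h1L
  have haL : a ≤ h := le_trans hab hbh
  have h2aL : 2*a ≤ L := by
    have : 2*a ≤ 2*b := by omega
    omega
  -- the finsets
  have hRD : rectF h h c ⊆ rectF L L L := by
    intro v hv
    have h1 : v ∈ rect h h c := hv
    have h2 := rect_subset_rect hhL hhL (le_trans hcZ hZL) h1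
    exact h2
  -- int cast facts for coordinates
  have hbhZ : (b:ℤ) ≤ (h:ℤ) := by exact_mod_cast hbh
  have hahZ : (a:ℤ) ≤ (h:ℤ) := by exact_mod_cast haL
  have hcZZ : (c:ℤ) ≤ (Z:ℤ) := by exact_mod_cast hcZ
  have hhLZ : (h:ℤ) ≤ (L:ℤ) := by exact_mod_cast hhL
  have hZLZ : (Z:ℤ) ≤ (L:ℤ) := by exact_mod_cast hZL
  have h1hZ : (1:ℤ) ≤ (h:ℤ) := by exact_mod_cast h1h
  have h1LZ : (1:ℤ) ≤ (L:ℤ) := by exact_mod_cast h1L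
  -- blocks inside D \ R
  have hblkX : ∀ x : ℤ, (h:ℤ) < x → x ≤ (L:ℤ) → ∀ i j : ℕ, i < h/b → j < Z/c →
      blockXF b c x i j ⊆ rectF L L L \ rectF h h c := by
    intro x hx1 hx2 i j hi hj
    have hib : (i+1)*b ≤ h := le_trans (Nat.mul_le_mul_right b (by omega)) (Nat.div_mul_le_self h b)
    have hibZ : ((i:ℤ)+1)*(b:ℤ) ≤ (h:ℤ) := by exact_mod_cast hib
    have hibZ' : (i:ℤ)*(b:ℤ) + b ≤ (h:ℤ) := by
      have e : ((i:ℤ)+1)*(b:ℤ) = (i:ℤ)*(b:ℤ) + b := by ring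
      linarith only [hibZ, e]
    have hjc : (j+1)*c ≤ Z := le_trans (Nat.mul_le_mul_right c (by omega)) (Nat.div_mul_le_self Z c)
    have hjcZ : ((j:ℤ)+1)*(c:ℤ) ≤ (Z:ℤ) := by exact_mod_cast hjc
    have hjcZ' : (j:ℤ)*(c:ℤ) + c ≤ (Z:ℤ) := by
      have e : ((j:ℤ)+1)*(c:ℤ) = (j:ℤ)*(c:ℤ) + c := by ring
      linarith only [hjcZ, e]
    have hi0 : (0:ℤ) ≤ (i:ℤ)*(b:ℤ) := by positivity
    have hj0 : (0:ℤ) ≤ (j:ℤ)*(c:ℤ) := by positivity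
    intro v hv
    rw [mem_blockXF] at hv
    obtain ⟨hv1, ⟨hv2a, hv2b⟩, hv3a, hv3b⟩ := hv
    rw [Finset.mem_sdiff]
    constructor
    · show v ∈ rect L L L
      rw [mem_rect]
      refine ⟨⟨by linarith only [hv1, hx1, h1hZ], by linarith only [hv1, hx2]⟩,
        ⟨by linarith only [hv2a, hi0], by linarith only [hv2b, hibZ', hhLZ]⟩,
        by linarith only [hv3a, hj0], by linarith only [hv3b, hjcZ', hZLZ]⟩
    · intro hvR
      have hm : v ∈ rect h h c := hvR
      rw [mem_rect] at hm
      have := hm.1.2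
      linarith only [this, hv1, hx1]
  have hblkY : ∀ y : ℤ, (h:ℤ) < y → y ≤ (L:ℤ) → ∀ i j : ℕ, i < L/a → j < Z/c →
      blockYF a c y i j ⊆ rectF L L L \ rectF h h c := by
    intro y hy1 hy2 i j hi hj
    have hia : (i+1)*a ≤ L := le_trans (Nat.mul_le_mul_right a (by omega)) (Nat.div_mul_le_self L a)
    have hiaZ : ((i:ℤ)+1)*(a:ℤ) ≤ (L:ℤ) := by exact_mod_cast hia
    have hiaZ' : (i:ℤ)*(a:ℤ) + a ≤ (L:ℤ) := by
      have e : ((i:ℤ)+1)*(a:ℤ) = (i:ℤ)*(a:ℤ) + a := by ring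
      linarith only [hiaZ, e]
    have hjc : (j+1)*c ≤ Z := le_trans (Nat.mul_le_mul_right c (by omega)) (Nat.div_mul_le_self Z c)
    have hjcZ : ((j:ℤ)+1)*(c:ℤ) ≤ (Z:ℤ) := by exact_mod_cast hjc
    have hjcZ' : (j:ℤ)*(c:ℤ) + c ≤ (Z:ℤ) := by
      have e : ((j:ℤ)+1)*(c:ℤ) = (j:ℤ)*(c:ℤ) + c := by ring
      linarith only [hjcZ, e]
    have hi0 : (0:ℤ) ≤ (i:ℤ)*(a:ℤ) := by positivity
    have hj0 : (0:ℤ) ≤ (j:ℤ)*(c:ℤ) := by positivity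
    intro v hv
    rw [mem_blockYF] at hv
    obtain ⟨⟨hv1a, hv1b⟩, hv2, hv3a, hv3b⟩ := hv
    rw [Finset.mem_sdiff]
    constructor
    · show v ∈ rect L L L
      rw [mem_rect]
      refine ⟨⟨by linarith only [hv1a, hi0], by linarith only [hv1b, hiaZ']⟩,
        ⟨by linarith only [hv2, hy1, h1hZ], by linarith only [hv2, hy2]⟩,
        by linarith only [hv3a, hj0], by linarith only [hv3b, hjcZ', hZLZ]⟩
    · intro hvR
      have hm : v ∈ rect h h c := hvR
      rw [mem_rect] at hm
      have := hm.2.1.2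
      linarith only [this, hv2, hy1]
  have hlay1 : ∀ z : ℤ, (c:ℤ) < z → z ≤ (Z:ℤ) →
      layerF h z ⊆ rectF L L L \ rectF h h c := by
    intro z hz1 hz2 v hv
    rw [mem_layerF] at hv
    obtain ⟨⟨m1, m2⟩, ⟨m3, m4⟩, m5⟩ := hv
    rw [Finset.mem_sdiff]
    constructor
    · show v ∈ rect L L L
      rw [mem_rect]
      exact ⟨⟨m1, by omega⟩, ⟨m3, by omega⟩, by omega, by omega⟩
    · intro hvR
      have hm : v ∈ rect h h c := hvR
      rw [mem_rect] at hm
      omega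
  have hlay4 : ∀ z : ℤ, (Z:ℤ) < z → z ≤ (L:ℤ) →
      layerF L z ⊆ rectF L L L \ rectF h h c := by
    intro z hz1 hz2 v hv
    rw [mem_layerF] at hv
    obtain ⟨⟨m1, m2⟩, ⟨m3, m4⟩, m5⟩ := hv
    rw [Finset.mem_sdiff]
    constructor
    · show v ∈ rect L L L
      rw [mem_rect]
      exact ⟨⟨m1, m2⟩, ⟨m3, m4⟩, by omega, by omega⟩
    · intro hvR
      have hm : v ∈ rect h h c := hvR
      rw [mem_rect] at hm
      omega
  -- the good events
  obtain ⟨G1, hG1⟩ : ∃ G : Finset V3 → Prop, G = fun A =>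
      ∀ z ∈ Finset.Icc ((c:ℤ)+1) (Z:ℤ), (A ∩ layerF h z).Nonempty := ⟨_, rfl⟩
  obtain ⟨G2, hG2⟩ : ∃ G : Finset V3 → Prop, G = fun A =>
      ∀ x ∈ Finset.Icc ((h:ℤ)+1) (L:ℤ),
        ∃ ij ∈ Finset.range (h/b) ×ˢ Finset.range (Z/c), blockXF b c x ij.1 ij.2 ⊆ A := ⟨_, rfl⟩
  obtain ⟨G3, hG3⟩ : ∃ G : Finset V3 → Prop, G = fun A =>
      ∀ y ∈ Finset.Icc ((h:ℤ)+1) (L:ℤ),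
        ∃ ij ∈ Finset.range (L/a) ×ˢ Finset.range (Z/c), blockYF a c y ij.1 ij.2 ⊆ A := ⟨_, rfl⟩
  obtain ⟨G4, hG4⟩ : ∃ G : Finset V3 → Prop, G = fun A =>
      ∀ z ∈ Finset.Icc ((Z:ℤ)+1) (L:ℤ), (A ∩ layerF L z).Nonempty := ⟨_, rfl⟩
  -- determinism: good events + seed fill everything
  have hdet : ∀ A : Finset V3, G1 A → G2 A → G3 A → G4 A →
      IFill a b c (c+1) (rect h h c) A → IFill a b c (c+1) (rect L L L) A := by
    intro A hA1 hA2 hA3 hA4 hF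
    rw [hG1] at hA1; rw [hG2] at hA2; rw [hG3] at hA3; rw [hG4] at hA4
    have seed : rect h h c ⊆ closure3 a b c (c+1) (rect L L L) ↑A := by
      refine subset_trans hF (closure3_mono ?_ ?_)
      · exact rect_subset_rect hhL hhL (le_trans hcZ hZL)
      · exact Set.inter_subset_inter subset_rfl (rect_subset_rect hhL hhL (le_trans hcZ hZL))
    apply grow a b c h Z L A ha2 hab hbc hcab hbh hcZ hhL hZL seed
    · -- g1
      intro z hz1 hz2
      obtain ⟨v, hv⟩ := hA1 z (Finset.mem_Icc.mpr ⟨by omega, hz2⟩)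
      rw [Finset.mem_inter, mem_layerF] at hv
      exact ⟨v, hv.1, hv.2.1, hv.2.2.1, hv.2.2.2⟩
    · -- g2
      intro x hx1 hx2
      obtain ⟨ij, hijI, hsub⟩ := hA2 x (Finset.mem_Icc.mpr ⟨by omega, hx2⟩)
      rw [Finset.mem_product, Finset.mem_range, Finset.mem_range] at hijI
      obtain ⟨hi, hj⟩ := hijI
      have hib : (ij.1+1)*b ≤ h :=
        le_trans (Nat.mul_le_mul_right b (by omega)) (Nat.div_mul_le_self h b)
      have hibZ : ((ij.1:ℤ)+1)*(b:ℤ) ≤ (h:ℤ) := by exact_mod_cast hib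
      have hibZ' : (ij.1:ℤ)*(b:ℤ) + b ≤ (h:ℤ) := by
        have e : ((ij.1:ℤ)+1)*(b:ℤ) = (ij.1:ℤ)*(b:ℤ) + b := by ring
        linarith only [hibZ, e]
      have hjc : (ij.2+1)*c ≤ Z :=
        le_trans (Nat.mul_le_mul_right c (by omega)) (Nat.div_mul_le_self Z c)
      have hjcZ : ((ij.2:ℤ)+1)*(c:ℤ) ≤ (Z:ℤ) := by exact_mod_cast hjc
      have hjcZ' : (ij.2:ℤ)*(c:ℤ) + c ≤ (Z:ℤ) := by
        have e : ((ij.2:ℤ)+1)*(c:ℤ) = (ij.2:ℤ)*(c:ℤ) + c := by ring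
        linarith only [hjcZ, e]
      have hi0 : (0:ℤ) ≤ (ij.1:ℤ)*(b:ℤ) := by positivity
      have hj0 : (0:ℤ) ≤ (ij.2:ℤ)*(c:ℤ) := by positivity
      refine ⟨(ij.1:ℤ)*b+1, (ij.2:ℤ)*c+1, by linarith only [hi0],
        by linarith only [hibZ'], by linarith only [hj0], by linarith only [hjcZ'], ?_⟩
      intro y z hy1 hy2 hz1 hz2
      apply hsub
      rw [mem_blockXF]
      exact ⟨rfl, ⟨by linarith only [hy1], by linarith only [hy2]⟩,
        by linarith only [hz1], by linarith only [hz2]⟩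
    · -- g3
      intro y hy1 hy2
      obtain ⟨ij, hijI, hsub⟩ := hA3 y (Finset.mem_Icc.mpr ⟨by omega, hy2⟩)
      rw [Finset.mem_product, Finset.mem_range, Finset.mem_range] at hijI
      obtain ⟨hi, hj⟩ := hijI
      have hia : (ij.1+1)*a ≤ L :=
        le_trans (Nat.mul_le_mul_right a (by omega)) (Nat.div_mul_le_self L a)
      have hiaZ : ((ij.1:ℤ)+1)*(a:ℤ) ≤ (L:ℤ) := by exact_mod_cast hia
      have hiaZ' : (ij.1:ℤ)*(a:ℤ) + a ≤ (L:ℤ) := by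
        have e : ((ij.1:ℤ)+1)*(a:ℤ) = (ij.1:ℤ)*(a:ℤ) + a := by ring
        linarith only [hiaZ, e]
      have hjc : (ij.2+1)*c ≤ Z :=
        le_trans (Nat.mul_le_mul_right c (by omega)) (Nat.div_mul_le_self Z c)
      have hjcZ : ((ij.2:ℤ)+1)*(c:ℤ) ≤ (Z:ℤ) := by exact_mod_cast hjc
      have hjcZ' : (ij.2:ℤ)*(c:ℤ) + c ≤ (Z:ℤ) := by
        have e : ((ij.2:ℤ)+1)*(c:ℤ) = (ij.2:ℤ)*(c:ℤ) + c := by ring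
        linarith only [hjcZ, e]
      have hi0 : (0:ℤ) ≤ (ij.1:ℤ)*(a:ℤ) := by positivity
      have hj0 : (0:ℤ) ≤ (ij.2:ℤ)*(c:ℤ) := by positivity
      refine ⟨(ij.1:ℤ)*a+1, (ij.2:ℤ)*c+1, by linarith only [hi0],
        by linarith only [hiaZ'], by linarith only [hj0], by linarith only [hjcZ'], ?_⟩
      intro x z hx1' hx2' hz1 hz2
      apply hsub
      rw [mem_blockYF]
      exact ⟨⟨by linarith only [hx1'], by linarith only [hx2']⟩, rfl,
        by linarith only [hz1], by linarith only [hz2]⟩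
    · -- g4
      intro z hz1 hz2
      obtain ⟨v, hv⟩ := hA4 z (Finset.mem_Icc.mpr ⟨by omega, hz2⟩)
      rw [Finset.mem_inter, mem_layerF] at hv
      exact ⟨v, hv.1, hv.2.1, hv.2.2.1, hv.2.2.2⟩
  -- ===== probability part =====
  have hSsub : (rectF L L L \ rectF h h c) ⊆ rectF L L L := Finset.sdiff_subset
  have hdisjSR : Disjoint (rectF L L L \ rectF h h c) (rectF h h c) := Finset.sdiff_disjoint
  -- support of F on R
  have hFsupp : ∀ A : Finset V3, IFill a b c (c+1) (rect h h c) A ↔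
      IFill a b c (c+1) (rect h h c) (A ∩ rectF h h c) := by
    intro A
    have hseed : (↑(A ∩ rectF h h c) : Set V3) ∩ rect h h c = (↑A : Set V3) ∩ rect h h c := by
      rw [Finset.coe_inter, Set.inter_assoc]
      congr 1
      exact Set.inter_self _
    have hkey : closure3 a b c (c+1) (rect h h c) ↑(A ∩ rectF h h c)
        = closure3 a b c (c+1) (rect h h c) ↑A := by
      unfold closure3
      rw [hseed]
    unfold IFill
    rw [hkey]
  -- supports of the good events on S = D \ R
  have hG1supp : ∀ A : Finset V3, G1 A ↔ G1 (A ∩ (rectF L L L \ rectF h h c)) := by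
    intro A
    rw [hG1]
    apply forall_congr'
    intro z
    apply imp_congr_right
    intro hz
    have hzIcc := Finset.mem_Icc.mp hz
    have hsub := hlay1 z (by omega) hzIcc.2
    have hEq : (A ∩ (rectF L L L \ rectF h h c)) ∩ layerF h z = A ∩ layerF h z := by
      rw [Finset.inter_assoc]
      congr 1
      exact Finset.inter_eq_right.mpr hsub
    rw [hEq]
  have hG2supp : ∀ A : Finset V3, G2 A ↔ G2 (A ∩ (rectF L L L \ rectF h h c)) := by
    intro A
    rw [hG2]
    apply forall_congr'
    intro x
    apply imp_congr_right
    intro hx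
    have hxIcc := Finset.mem_Icc.mp hx
    apply exists_congr
    intro ij
    apply and_congr_right
    intro hij
    rw [Finset.mem_product, Finset.mem_range, Finset.mem_range] at hij
    have hblk := hblkX x (by omega) hxIcc.2 ij.1 ij.2 hij.1 hij.2
    constructor
    · intro hs
      exact Finset.subset_inter hs hblk
    · intro hs
      exact hs.trans Finset.inter_subset_left
  have hG3supp : ∀ A : Finset V3, G3 A ↔ G3 (A ∩ (rectF L L L \ rectF h h c)) := by
    intro A
    rw [hG3]
    apply forall_congr'
    intro y
    apply imp_congr_right
    intro hy
    have hyIcc := Finset.mem_Icc.mp hy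
    apply exists_congr
    intro ij
    apply and_congr_right
    intro hij
    rw [Finset.mem_product, Finset.mem_range, Finset.mem_range] at hij
    have hblk := hblkY y (by omega) hyIcc.2 ij.1 ij.2 hij.1 hij.2
    constructor
    · intro hs
      exact Finset.subset_inter hs hblk
    · intro hs
      exact hs.trans Finset.inter_subset_left
  have hG4supp : ∀ A : Finset V3, G4 A ↔ G4 (A ∩ (rectF L L L \ rectF h h c)) := by
    intro A
    rw [hG4]
    apply forall_congr'
    intro z
    apply imp_congr_right
    intro hz
    have hzIcc := Finset.mem_Icc.mp hz
    have hsub := hlay4 z (by omega) hzIcc.2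
    have hEq : (A ∩ (rectF L L L \ rectF h h c)) ∩ layerF L z = A ∩ layerF L z := by
      rw [Finset.inter_assoc]
      congr 1
      exact Finset.inter_eq_right.mpr hsub
    rw [hEq]
  obtain ⟨GG, hGG⟩ : ∃ G : Finset V3 → Prop,
      G = fun A => G1 A ∧ G2 A ∧ G3 A ∧ G4 A := ⟨_, rfl⟩
  have hGGsupp : ∀ A : Finset V3, GG A ↔ GG (A ∩ (rectF L L L \ rectF h h c)) := by
    intro A
    rw [hGG]
    exact and_congr (hG1supp A)
      (and_congr (hG2supp A) (and_congr (hG3supp A) (hG4supp A)))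
  -- positivity of the conditioning event
  have hPPFpos : 0 < PP (rectF L L L) p (IFill a b c (c+1) (rect h h c)) := by
    apply PP_pos hp0 hp1 (Finset.mem_powerset.mpr hRD)
    intro v hv
    exact subset_closure3 ⟨hv, hv⟩
  -- factorization and monotonicity
  have hmain : PP (rectF L L L) p (fun A => GG A ∧ IFill a b c (c+1) (rect h h c) A)
      ≤ PP (rectF L L L) p (fun A => IFill a b c (c+1) (rect L L L) A ∧
        IFill a b c (c+1) (rect h h c) A) := by
    apply PP_mono hp0.le hp1.le
    intro A _ hx
    have hg := hx.1
    rw [hGG] at hg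
    exact ⟨hdet A hg.1 hg.2.1 hg.2.2.1 hg.2.2.2 hx.2, hx.2⟩
  have hfact : PP (rectF L L L) p (fun A => GG A ∧ IFill a b c (c+1) (rect h h c) A)
      = PP (rectF L L L) p GG * PP (rectF L L L) p (IFill a b c (c+1) (rect h h c)) :=
    PP_indep hSsub hRD hdisjSR hGGsupp hFsupp
  have hcond : PP (rectF L L L) p GG ≤ PPc (rectF L L L) p
      (IFill a b c (c+1) (rect L L L)) (IFill a b c (c+1) (rect h h c)) := by
    unfold PPc
    rw [le_div_iff₀ hPPFpos]
    calc PP (rectF L L L) p GG * PP (rectF L L L) p (IFill a b c (c+1) (rect h h c))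
        = PP (rectF L L L) p (fun A => GG A ∧ IFill a b c (c+1) (rect h h c) A) := hfact.symm
      _ ≤ _ := hmain
  -- union bound for the bad event
  have hsplit : PP (rectF L L L) p (fun A => ¬ GG A) ≤
      PP (rectF L L L) p (fun A => ¬ G1 A) + (PP (rectF L L L) p (fun A => ¬ G2 A)
        + (PP (rectF L L L) p (fun A => ¬ G3 A) + PP (rectF L L L) p (fun A => ¬ G4 A))) := by
    calc PP (rectF L L L) p (fun A => ¬ GG A)
        ≤ PP (rectF L L L) p (fun A => ¬ G1 A ∨ (¬ G2 A ∨ (¬ G3 A ∨ ¬ G4 A))) := by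
          apply PP_mono hp0.le hp1.le
          intro A _ hng
          rw [hGG] at hng
          tauto
      _ ≤ _ := by
          refine le_trans (PP_or_le hp0.le hp1.le _ _) ?_
          apply add_le_add le_rfl
          refine le_trans (PP_or_le hp0.le hp1.le _ _) ?_
          apply add_le_add le_rfl
          exact PP_or_le hp0.le hp1.le _ _
  -- bound for ¬G1
  have hB1 : PP (rectF L L L) p (fun A => ¬ G1 A) ≤ (Z:ℝ) * (1-p) ^ (h*h) := by
    have step1 : PP (rectF L L L) p (fun A => ¬ G1 A) ≤
        PP (rectF L L L) p (fun A => ∃ z ∈ Finset.Icc ((c:ℤ)+1) (Z:ℤ),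
          A ∩ layerF h z = ∅) := by
      apply PP_mono hp0.le hp1.le
      intro A _ hng
      simp only [hG1] at hng
      push_neg at hng
      obtain ⟨z, hz, hne⟩ := hng
      exact ⟨z, hz, hne⟩
    have step2 := PP_exists_le (D := rectF L L L) hp0.le hp1.le
      (Finset.Icc ((c:ℤ)+1) (Z:ℤ)) (fun z A => A ∩ layerF h z = ∅)
    have step3 : ∑ z ∈ Finset.Icc ((c:ℤ)+1) (Z:ℤ),
        PP (rectF L L L) p (fun A => A ∩ layerF h z = ∅)
        = ∑ z ∈ Finset.Icc ((c:ℤ)+1) (Z:ℤ), ((1-p) ^ (h*h) : ℝ) := by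
      apply Finset.sum_congr rfl
      intro z hz
      have hzIcc := Finset.mem_Icc.mp hz
      have hsub : layerF h z ⊆ rectF L L L :=
        (hlay1 z (by omega) hzIcc.2).trans Finset.sdiff_subset
      rw [PP_inter_empty hsub, layerF_card]
    have step4 : ((Finset.Icc ((c:ℤ)+1) (Z:ℤ)).card : ℝ) ≤ (Z:ℝ) := by
      have hcard : (Finset.Icc ((c:ℤ)+1) (Z:ℤ)).card ≤ Z := by
        rw [Int.card_Icc]
        omega
      exact_mod_cast hcard
    have hpow_nn : (0:ℝ) ≤ (1-p) ^ (h*h) := pow_nonneg (by linarith only [hp1]) _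
    calc PP (rectF L L L) p (fun A => ¬ G1 A)
        ≤ ∑ z ∈ Finset.Icc ((c:ℤ)+1) (Z:ℤ),
            PP (rectF L L L) p (fun A => A ∩ layerF h z = ∅) := le_trans step1 step2
      _ = ((Finset.Icc ((c:ℤ)+1) (Z:ℤ)).card : ℝ) * (1-p) ^ (h*h) := by
          rw [step3, Finset.sum_const, nsmul_eq_mul]
      _ ≤ (Z:ℝ) * (1-p) ^ (h*h) := mul_le_mul_of_nonneg_right step4 hpow_nn
  -- bound for ¬G2
  have hB2 : PP (rectF L L L) p (fun A => ¬ G2 A) ≤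
      (L:ℝ) * (1 - p ^ (b*c)) ^ (h/b * (Z/c)) := by
    have step1 : PP (rectF L L L) p (fun A => ¬ G2 A) ≤
        PP (rectF L L L) p (fun A => ∃ x ∈ Finset.Icc ((h:ℤ)+1) (L:ℤ),
          ∀ ij ∈ Finset.range (h/b) ×ˢ Finset.range (Z/c),
            ¬ blockXF b c x ij.1 ij.2 ⊆ A) := by
      apply PP_mono hp0.le hp1.le
      intro A _ hng
      simp only [hG2] at hng
      push_neg at hng
      exact hng
    have step2 := PP_exists_le (D := rectF L L L) hp0.le hp1.le
      (Finset.Icc ((h:ℤ)+1) (L:ℤ)) (fun x A =>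
        ∀ ij ∈ Finset.range (h/b) ×ˢ Finset.range (Z/c), ¬ blockXF b c x ij.1 ij.2 ⊆ A)
    have step3 : ∀ x ∈ Finset.Icc ((h:ℤ)+1) (L:ℤ),
        PP (rectF L L L) p (fun A =>
          ∀ ij ∈ Finset.range (h/b) ×ˢ Finset.range (Z/c), ¬ blockXF b c x ij.1 ij.2 ⊆ A)
        = (1 - p ^ (b*c)) ^ (h/b * (Z/c)) := by
      intro x hx
      have hxIcc := Finset.mem_Icc.mp hx
      rw [PP_blocks (Finset.range (h/b) ×ˢ Finset.range (Z/c))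
        (fun ij => blockXF b c x ij.1 ij.2) ?_ ?_]
      · have hconst : ∀ ij ∈ Finset.range (h/b) ×ˢ Finset.range (Z/c),
            (1 - p ^ (blockXF b c x ij.1 ij.2).card : ℝ) = 1 - p ^ (b*c) := by
          intro ij _
          rw [blockXF_card]
        rw [Finset.prod_congr rfl hconst, Finset.prod_const, Finset.card_product,
          Finset.card_range, Finset.card_range]
      · intro ij hij
        rw [Finset.mem_product, Finset.mem_range, Finset.mem_range] at hij
        exact (hblkX x (by omega) hxIcc.2 ij.1 ij.2 hij.1 hij.2).trans Finset.sdiff_subset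
      · intro ij hij ij' hij' hne
        rw [Finset.mem_product, Finset.mem_range, Finset.mem_range] at hij hij'
        rw [Finset.disjoint_left]
        intro u hu hu'
        rw [mem_blockXF] at hu hu'
        by_cases hii : ij.1 = ij'.1
        · have hjj : ij.2 ≠ ij'.2 := by
            intro hjj
            exact hne (Prod.ext hii hjj)
          exact block_interval_disj hjj hu.2.2.1 hu.2.2.2 hu'.2.2.1 hu'.2.2.2
        · exact block_interval_disj hii hu.2.1.1 hu.2.1.2 hu'.2.1.1 hu'.2.1.2
    have step4 : ((Finset.Icc ((h:ℤ)+1) (L:ℤ)).card : ℝ) ≤ (L:ℝ) := by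
      have hcard : (Finset.Icc ((h:ℤ)+1) (L:ℤ)).card ≤ L := by
        rw [Int.card_Icc]
        omega
      exact_mod_cast hcard
    have hpbc1 : p ^ (b*c) ≤ 1 := pow_le_one₀ hp0.le hp1.le
    have hpow_nn : (0:ℝ) ≤ (1 - p ^ (b*c)) ^ (h/b * (Z/c)) := by
      apply pow_nonneg
      linarith only [hpbc1]
    calc PP (rectF L L L) p (fun A => ¬ G2 A)
        ≤ ∑ x ∈ Finset.Icc ((h:ℤ)+1) (L:ℤ), PP (rectF L L L) p (fun A =>
            ∀ ij ∈ Finset.range (h/b) ×ˢ Finset.range (Z/c),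
              ¬ blockXF b c x ij.1 ij.2 ⊆ A) := le_trans step1 step2
      _ = ((Finset.Icc ((h:ℤ)+1) (L:ℤ)).card : ℝ) * (1 - p ^ (b*c)) ^ (h/b * (Z/c)) := by
          rw [Finset.sum_congr rfl step3, Finset.sum_const, nsmul_eq_mul]
      _ ≤ (L:ℝ) * (1 - p ^ (b*c)) ^ (h/b * (Z/c)) := mul_le_mul_of_nonneg_right step4 hpow_nn
  -- bound for ¬G3
  have hB3 : PP (rectF L L L) p (fun A => ¬ G3 A) ≤
      (L:ℝ) * (1 - p ^ (a*c)) ^ (L/a * (Z/c)) := by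
    have step1 : PP (rectF L L L) p (fun A => ¬ G3 A) ≤
        PP (rectF L L L) p (fun A => ∃ y ∈ Finset.Icc ((h:ℤ)+1) (L:ℤ),
          ∀ ij ∈ Finset.range (L/a) ×ˢ Finset.range (Z/c),
            ¬ blockYF a c y ij.1 ij.2 ⊆ A) := by
      apply PP_mono hp0.le hp1.le
      intro A _ hng
      simp only [hG3] at hng
      push_neg at hng
      exact hng
    have step2 := PP_exists_le (D := rectF L L L) hp0.le hp1.le
      (Finset.Icc ((h:ℤ)+1) (L:ℤ)) (fun y A =>
        ∀ ij ∈ Finset.range (L/a) ×ˢ Finset.range (Z/c), ¬ blockYF a c y ij.1 ij.2 ⊆ A)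
    have step3 : ∀ y ∈ Finset.Icc ((h:ℤ)+1) (L:ℤ),
        PP (rectF L L L) p (fun A =>
          ∀ ij ∈ Finset.range (L/a) ×ˢ Finset.range (Z/c), ¬ blockYF a c y ij.1 ij.2 ⊆ A)
        = (1 - p ^ (a*c)) ^ (L/a * (Z/c)) := by
      intro y hy
      have hyIcc := Finset.mem_Icc.mp hy
      rw [PP_blocks (Finset.range (L/a) ×ˢ Finset.range (Z/c))
        (fun ij => blockYF a c y ij.1 ij.2) ?_ ?_]
      · have hconst : ∀ ij ∈ Finset.range (L/a) ×ˢ Finset.range (Z/c),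
            (1 - p ^ (blockYF a c y ij.1 ij.2).card : ℝ) = 1 - p ^ (a*c) := by
          intro ij _
          rw [blockYF_card]
        rw [Finset.prod_congr rfl hconst, Finset.prod_const, Finset.card_product,
          Finset.card_range, Finset.card_range]
      · intro ij hij
        rw [Finset.mem_product, Finset.mem_range, Finset.mem_range] at hij
        exact (hblkY y (by omega) hyIcc.2 ij.1 ij.2 hij.1 hij.2).trans Finset.sdiff_subset
      · intro ij hij ij' hij' hne
        rw [Finset.mem_product, Finset.mem_range, Finset.mem_range] at hij hij'
        rw [Finset.disjoint_left]
        intro u hu hu'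
        rw [mem_blockYF] at hu hu'
        by_cases hii : ij.1 = ij'.1
        · have hjj : ij.2 ≠ ij'.2 := by
            intro hjj
            exact hne (Prod.ext hii hjj)
          exact block_interval_disj hjj hu.2.2.1 hu.2.2.2 hu'.2.2.1 hu'.2.2.2
        · exact block_interval_disj hii hu.1.1 hu.1.2 hu'.1.1 hu'.1.2
    have step4 : ((Finset.Icc ((h:ℤ)+1) (L:ℤ)).card : ℝ) ≤ (L:ℝ) := by
      have hcard : (Finset.Icc ((h:ℤ)+1) (L:ℤ)).card ≤ L := by
        rw [Int.card_Icc]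
        omega
      exact_mod_cast hcard
    have hpac1 : p ^ (a*c) ≤ 1 := pow_le_one₀ hp0.le hp1.le
    have hpow_nn : (0:ℝ) ≤ (1 - p ^ (a*c)) ^ (L/a * (Z/c)) := by
      apply pow_nonneg
      linarith only [hpac1]
    calc PP (rectF L L L) p (fun A => ¬ G3 A)
        ≤ ∑ y ∈ Finset.Icc ((h:ℤ)+1) (L:ℤ), PP (rectF L L L) p (fun A =>
            ∀ ij ∈ Finset.range (L/a) ×ˢ Finset.range (Z/c),
              ¬ blockYF a c y ij.1 ij.2 ⊆ A) := le_trans step1 step2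
      _ = ((Finset.Icc ((h:ℤ)+1) (L:ℤ)).card : ℝ) * (1 - p ^ (a*c)) ^ (L/a * (Z/c)) := by
          rw [Finset.sum_congr rfl step3, Finset.sum_const, nsmul_eq_mul]
      _ ≤ (L:ℝ) * (1 - p ^ (a*c)) ^ (L/a * (Z/c)) := mul_le_mul_of_nonneg_right step4 hpow_nn
  -- bound for ¬G4
  have hB4 : PP (rectF L L L) p (fun A => ¬ G4 A) ≤ (L:ℝ) * (1-p) ^ (L*L) := by
    have step1 : PP (rectF L L L) p (fun A => ¬ G4 A) ≤
        PP (rectF L L L) p (fun A => ∃ z ∈ Finset.Icc ((Z:ℤ)+1) (L:ℤ),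
          A ∩ layerF L z = ∅) := by
      apply PP_mono hp0.le hp1.le
      intro A _ hng
      simp only [hG4] at hng
      push_neg at hng
      obtain ⟨z, hz, hne⟩ := hng
      exact ⟨z, hz, hne⟩
    have step2 := PP_exists_le (D := rectF L L L) hp0.le hp1.le
      (Finset.Icc ((Z:ℤ)+1) (L:ℤ)) (fun z A => A ∩ layerF L z = ∅)
    have step3 : ∑ z ∈ Finset.Icc ((Z:ℤ)+1) (L:ℤ),
        PP (rectF L L L) p (fun A => A ∩ layerF L z = ∅)
        = ∑ z ∈ Finset.Icc ((Z:ℤ)+1) (L:ℤ), ((1-p) ^ (L*L) : ℝ) := by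
      apply Finset.sum_congr rfl
      intro z hz
      have hzIcc := Finset.mem_Icc.mp hz
      have hsub : layerF L z ⊆ rectF L L L :=
        (hlay4 z (by omega) hzIcc.2).trans Finset.sdiff_subset
      rw [PP_inter_empty hsub, layerF_card]
    have step4 : ((Finset.Icc ((Z:ℤ)+1) (L:ℤ)).card : ℝ) ≤ (L:ℝ) := by
      have hcard : (Finset.Icc ((Z:ℤ)+1) (L:ℤ)).card ≤ L := by
        rw [Int.card_Icc]
        omega
      exact_mod_cast hcard
    have hpow_nn : (0:ℝ) ≤ (1-p) ^ (L*L) := pow_nonneg (by linarith only [hp1]) _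
    calc PP (rectF L L L) p (fun A => ¬ G4 A)
        ≤ ∑ z ∈ Finset.Icc ((Z:ℤ)+1) (L:ℤ),
            PP (rectF L L L) p (fun A => A ∩ layerF L z = ∅) := le_trans step1 step2
      _ = ((Finset.Icc ((Z:ℤ)+1) (L:ℤ)).card : ℝ) * (1-p) ^ (L*L) := by
          rw [step3, Finset.sum_const, nsmul_eq_mul]
      _ ≤ (L:ℝ) * (1-p) ^ (L*L) := mul_le_mul_of_nonneg_right step4 hpow_nn
  -- ===== analytic estimates =====
  have hq2qq : q ≤ q*q := by nlinarith only [hq1, hq0]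
  have hqq1 : (1:ℝ) ≤ q*q := by nlinarith only [hq1]
  -- T1 ≤ 2p
  have hA1 : (Z:ℝ) * (1-p) ^ (h*h) ≤ 2*p := by
    have e1 : (1-p) ^ (h*h) ≤ Real.exp (-(((h*h : ℕ):ℝ) * p)) :=
      one_sub_pow_le_exp hp0.le hp1.le _
    have s1 : ((c:ℝ)*qh*lh)*((c:ℝ)*qh*lh) ≤ (h:ℝ)*(h:ℝ) :=
      mul_le_mul hhlow hhlow (by positivity) (Nat.cast_nonneg h)
    have s2 : ((c:ℝ)*qh*lh)*((c:ℝ)*qh*lh) = (c:ℝ)^2 * (qh*qh) * (lh*lh) := by ring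
    rw [hqh2, hlh2] at s2
    have s3 : (c:ℝ)^2*q*l*p = (c:ℝ)^2*l*(p*q) := by ring
    rw [hpq1, mul_one] at s3
    have e2 : (c:ℝ)^2 * l ≤ ((h*h:ℕ):ℝ) * p := by
      have s4 : (c:ℝ)^2*q*l ≤ (h:ℝ)*(h:ℝ) := by linarith only [s1, s2]
      have s5 : ((c:ℝ)^2*q*l)*p ≤ ((h:ℝ)*(h:ℝ))*p :=
        mul_le_mul_of_nonneg_right s4 hp0.le
      have s6 : ((h*h:ℕ):ℝ) = (h:ℝ)*(h:ℝ) := by push_cast; ring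
      rw [s6]
      linarith only [s5, s3]
    have e3 : Real.exp (-(((h*h:ℕ):ℝ)*p)) ≤ Real.exp (-((c:ℝ)^2*l)) :=
      Real.exp_le_exp.mpr (by linarith only [e2])
    have e4 : Real.exp (-((c:ℝ)^2*l)) = p^(c*c) := by
      have s7 : Real.exp (((c*c:ℕ):ℝ)*l) = q^(c*c) := by rw [Real.exp_nat_mul, hexpl]
      have s8 : ((c:ℝ)^2*l) = ((c*c:ℕ):ℝ)*l := by push_cast; ring
      rw [s8, Real.exp_neg, s7, hqdef, one_div, inv_pow, inv_inv]
    have hcc : b*c+2+1 ≤ c*c := by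
      have s9 : (b+1)*c ≤ c*c := Nat.mul_le_mul_right c (by omega)
      have s10 : (b+1)*c = b*c+c := by ring
      omega
    have e5 : q^(b*c+2) * p^(c*c) = p^(c*c-(b*c+2)) := by
      have s11 : p^(c*c) = p^(c*c-(b*c+2)) * p^(b*c+2) := by
        rw [← pow_add]
        congr 1
        omega
      have s12 : q^(b*c+2) * p^(b*c+2) = 1 := by
        rw [← mul_pow, mul_comm q p, hpq1, one_pow]
      calc q^(b*c+2) * p^(c*c) = p^(c*c-(b*c+2)) * (q^(b*c+2)*p^(b*c+2)) := by
            rw [s11]; ring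
        _ = p^(c*c-(b*c+2)) := by rw [s12, mul_one]
    have e6 : p^(c*c-(b*c+2)) ≤ p := by
      calc p^(c*c-(b*c+2)) ≤ p^1 := pow_le_pow_of_le_one hp0.le hp1.le (by omega)
        _ = p := pow_one p
    calc (Z:ℝ)*(1-p)^(h*h)
        ≤ (Z:ℝ)*p^(c*c) := by
          apply mul_le_mul_of_nonneg_left _ (Nat.cast_nonneg Z)
          calc (1-p)^(h*h) ≤ Real.exp (-(((h*h:ℕ):ℝ)*p)) := e1
            _ ≤ Real.exp (-((c:ℝ)^2*l)) := e3
            _ = p^(c*c) := e4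
      _ ≤ (q^(b*c+2)+1)*p^(c*c) := mul_le_mul_of_nonneg_right hZup.le (by positivity)
      _ ≤ (2*q^(b*c+2))*p^(c*c) := mul_le_mul_of_nonneg_right
            (by linarith only [hqbc1]) (by positivity)
      _ = 2*(q^(b*c+2)*p^(c*c)) := by ring
      _ = 2*p^(c*c-(b*c+2)) := by rw [e5]
      _ ≤ 2*p := by linarith only [e6]
  -- auxiliary: L ≤ exp (lam + 1) and exp(-l) = p
  have hLexp : (L:ℝ) ≤ Real.exp (lam + 1) := by
    have e1 : lam + 1 ≤ Real.exp lam := Real.add_one_le_exp lam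
    have e2 : (1:ℝ) ≤ Real.exp lam := by linarith only [e1, hlam0]
    have e3 : Real.exp 1 * Real.exp lam = Real.exp (lam+1) := by
      rw [← Real.exp_add]
      ring_nf
    have e4 : 2*Real.exp lam ≤ Real.exp 1 * Real.exp lam :=
      mul_le_mul_of_nonneg_right (by linarith only [Real.exp_one_gt_d9]) (Real.exp_pos lam).le
    linarith only [hLup, e2, e3, e4]
  have hexpnegl : Real.exp (-l) = p := by
    rw [Real.exp_neg, hexpl, hqdef, one_div, inv_inv]
  -- T2 ≤ p
  have hA2 : (L:ℝ) * (1 - p ^ (b*c)) ^ (h/b * (Z/c)) ≤ p := by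
    have hpbc0 : (0:ℝ) ≤ p^(b*c) := by positivity
    have hpbc1 : p ^ (b*c) ≤ 1 := pow_le_one₀ hp0.le hp1.le
    have hu2 : (1 - p ^ (b*c)) ^ (h/b * (Z/c)) ≤
        Real.exp (-(((h/b * (Z/c) : ℕ):ℝ) * p^(b*c))) :=
      one_sub_pow_le_exp hpbc0 hpbc1 _
    have hM2target : lam + l + 1 ≤ ((h/b * (Z/c) : ℕ):ℝ) * p^(b*c) := by
      have d1 : (h:ℝ)/(2*(b:ℝ)) ≤ ((h/b : ℕ):ℝ) := nat_div_lb h b (by omega) h2bh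
      have d2 : (Z:ℝ)/(2*(c:ℝ)) ≤ ((Z/c : ℕ):ℝ) := nat_div_lb Z c (by omega) h2cZ
      have d3 : ((h/b * (Z/c) : ℕ):ℝ) = ((h/b:ℕ):ℝ) * ((Z/c:ℕ):ℝ) := by push_cast; ring
      have d4 : (h:ℝ)/(2*(b:ℝ)) * ((Z:ℝ)/(2*(c:ℝ))) ≤ ((h/b * (Z/c) : ℕ):ℝ) := by
        rw [d3]
        exact mul_le_mul d1 d2 (by positivity) (Nat.cast_nonneg _)
      have d5 : q^(b*c)*q^2 = q^(b*c+2) := by rw [← pow_add]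
      have d6a : qh/(2*(b:ℝ)) ≤ (h:ℝ)/(2*(b:ℝ)) :=
        (div_le_div_iff_of_pos_right (by positivity)).mpr hqh_h
      have d6b : (q^(b*c)*q^2)/(2*(c:ℝ)) ≤ (Z:ℝ)/(2*(c:ℝ)) :=
        (div_le_div_iff_of_pos_right (by positivity)).mpr (by rw [d5]; exact hZlow)
      have d6 : qh/(2*(b:ℝ)) * ((q^(b*c)*q^2)/(2*(c:ℝ))) ≤
          (h:ℝ)/(2*(b:ℝ)) * ((Z:ℝ)/(2*(c:ℝ))) :=
        mul_le_mul d6a d6b (by positivity) (by positivity)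
      have hpqbc : p^(b*c) * q^(b*c) = 1 := by rw [← mul_pow, hpq1, one_pow]
      have d7 : p^(b*c) * (qh/(2*(b:ℝ)) * ((q^(b*c)*q^2)/(2*(c:ℝ))))
          = qh*q^2/(4*(b:ℝ)*(c:ℝ)) := by
        have e : p^(b*c) * (qh/(2*(b:ℝ)) * ((q^(b*c)*q^2)/(2*(c:ℝ))))
            = (p^(b*c) * q^(b*c)) * (qh*q^2/(4*(b:ℝ)*(c:ℝ))) := by
          field_simp
          ring
        rw [e, hpqbc, one_mul]
      have d8 : qh*q^2/(4*(b:ℝ)*(c:ℝ)) ≤ ((h/b * (Z/c) : ℕ):ℝ) * p^(b*c) := by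
        calc qh*q^2/(4*(b:ℝ)*(c:ℝ))
            = p^(b*c) * (qh/(2*(b:ℝ)) * ((q^(b*c)*q^2)/(2*(c:ℝ)))) := d7.symm
          _ ≤ p^(b*c) * ((h:ℝ)/(2*(b:ℝ)) * ((Z:ℝ)/(2*(c:ℝ)))) :=
              mul_le_mul_of_nonneg_left d6 (by positivity)
          _ ≤ p^(b*c) * ((h/b * (Z/c) : ℕ):ℝ) :=
              mul_le_mul_of_nonneg_left d4 (by positivity)
          _ = ((h/b * (Z/c) : ℕ):ℝ) * p^(b*c) := by ring
      have d9 : 4*(b:ℝ)*(c:ℝ)*(Γ+2) < qh := by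
        apply lt_of_sq_lt_sq' hqh0.le _ (by positivity)
        rw [hqh2]
        nlinarith only [hq_k1]
      have d10 : (Γ+2)*(q*q) ≤ qh*q^2/(4*(b:ℝ)*(c:ℝ)) := by
        rw [le_div_iff₀ (by positivity)]
        calc (Γ+2)*(q*q)*(4*(b:ℝ)*(c:ℝ)) = (4*(b:ℝ)*(c:ℝ)*(Γ+2))*(q*q) := by ring
          _ ≤ qh*(q*q) := mul_le_mul_of_nonneg_right d9.le (by positivity)
          _ = qh*q^2 := by ring
      have d11 : lam + l + 1 ≤ (Γ+2)*(q*q) := by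
        nlinarith only [hlam_le, hlq, hq2qq, hqq1, hq1]
      linarith only [d8, d10, d11]
    have hexp_nn : (0:ℝ) ≤ Real.exp (-(((h/b * (Z/c) : ℕ):ℝ) * p^(b*c))) :=
      (Real.exp_pos _).le
    have hu2_nn : (0:ℝ) ≤ (1 - p ^ (b*c)) ^ (h/b * (Z/c)) :=
      pow_nonneg (by linarith only [hpbc1]) _
    calc (L:ℝ) * (1 - p ^ (b*c)) ^ (h/b * (Z/c))
        ≤ Real.exp (lam+1) * Real.exp (-(((h/b * (Z/c) : ℕ):ℝ) * p^(b*c))) :=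
          mul_le_mul hLexp hu2 hu2_nn (Real.exp_pos _).le
      _ = Real.exp (lam+1 - ((h/b * (Z/c) : ℕ):ℝ) * p^(b*c)) := by
          rw [← Real.exp_add]
          ring_nf
      _ ≤ Real.exp (-l) := Real.exp_le_exp.mpr (by linarith only [hM2target])
      _ = p := hexpnegl
  -- T3 ≤ p
  have hA3 : (L:ℝ) * (1 - p ^ (a*c)) ^ (L/a * (Z/c)) ≤ p := by
    have hpac0 : (0:ℝ) ≤ p^(a*c) := by positivity
    have hpac1 : p ^ (a*c) ≤ 1 := pow_le_one₀ hp0.le hp1.le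
    have hu3 : (1 - p ^ (a*c)) ^ (L/a * (Z/c)) ≤
        Real.exp (-(((L/a * (Z/c) : ℕ):ℝ) * p^(a*c))) :=
      one_sub_pow_le_exp hpac0 hpac1 _
    have hpL : q^(b*c+2) ≤ p * (L:ℝ) := by
      have s1 : p * q^(b*c+3) ≤ p * (L:ℝ) := mul_le_mul_of_nonneg_left hqL hp0.le
      have s2 : p * q^(b*c+3) = q^(b*c+2) := by
        rw [pow_succ]
        calc p * (q^(b*c+2) * q) = q^(b*c+2) * (p*q) := by ring
          _ = q^(b*c+2) := by rw [hpq1, mul_one]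
      linarith only [s1, s2]
    have hM3target : (L:ℝ)/(4*(a:ℝ)*(c:ℝ)) ≤ ((L/a * (Z/c) : ℕ):ℝ) * p^(a*c) := by
      have d1 : (L:ℝ)/(2*(a:ℝ)) ≤ ((L/a : ℕ):ℝ) := nat_div_lb L a (by omega) h2aL
      have d2 : (Z:ℝ)/(2*(c:ℝ)) ≤ ((Z/c : ℕ):ℝ) := nat_div_lb Z c (by omega) h2cZ
      have d3 : ((L/a * (Z/c) : ℕ):ℝ) = ((L/a:ℕ):ℝ) * ((Z/c:ℕ):ℝ) := by push_cast; ring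
      have d4 : (L:ℝ)/(2*(a:ℝ)) * ((Z:ℝ)/(2*(c:ℝ))) ≤ ((L/a * (Z/c) : ℕ):ℝ) := by
        rw [d3]
        exact mul_le_mul d1 d2 (by positivity) (Nat.cast_nonneg _)
      have hacbc : a*c ≤ b*c+2 := by
        have : a*c ≤ b*c := Nat.mul_le_mul_right c hab
        omega
      have d5 : q^(b*c+2) * p^(a*c) = q^(b*c+2-(a*c)) := by
        have s11 : q^(b*c+2) = q^(b*c+2-(a*c)) * q^(a*c) := by
          rw [← pow_add]
          congr 1
          omega
        have s12 : q^(a*c) * p^(a*c) = 1 := by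
          rw [← mul_pow, mul_comm q p, hpq1, one_pow]
        calc q^(b*c+2) * p^(a*c) = q^(b*c+2-(a*c)) * (q^(a*c) * p^(a*c)) := by
              rw [s11]; ring
          _ = q^(b*c+2-(a*c)) := by rw [s12, mul_one]
      have d6 : (1:ℝ) ≤ q^(b*c+2) * p^(a*c) := by
        rw [d5]
        exact one_le_pow₀ hq1.le
      have d7 : (1:ℝ) ≤ (Z:ℝ) * p^(a*c) := by
        have hstep := mul_le_mul_of_nonneg_right hZlow
          (le_of_lt (by positivity : (0:ℝ) < p^(a*c)))
        linarith only [hstep, d6]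
      have d8 : 1/(2*(c:ℝ)) ≤ (Z:ℝ)/(2*(c:ℝ)) * p^(a*c) := by
        have he : (Z:ℝ)/(2*(c:ℝ)) * p^(a*c) = ((Z:ℝ) * p^(a*c))/(2*(c:ℝ)) := by ring
        rw [he]
        exact (div_le_div_iff_of_pos_right (by positivity)).mpr d7
      calc (L:ℝ)/(4*(a:ℝ)*(c:ℝ))
          = (L:ℝ)/(2*(a:ℝ)) * (1/(2*(c:ℝ))) := by
            rw [div_mul_div_comm, mul_one]
            congr 1
            ring
        _ ≤ (L:ℝ)/(2*(a:ℝ)) * ((Z:ℝ)/(2*(c:ℝ)) * p^(a*c)) :=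
            mul_le_mul_of_nonneg_left d8 (by positivity)
        _ = (L:ℝ)/(2*(a:ℝ)) * ((Z:ℝ)/(2*(c:ℝ))) * p^(a*c) := by ring
        _ ≤ ((L/a * (Z/c) : ℕ):ℝ) * p^(a*c) :=
            mul_le_mul_of_nonneg_right d4 (by positivity)
    have hq64 : 64*(a:ℝ)^2*(c:ℝ)^2 ≤ p * (L:ℝ) := by
      have s1 : q ≤ q^(b*c+2) := hq_le_pow _ (by omega)
      linarith only [hpL, s1, hq_ac]
    have hfinal : (L:ℝ) * Real.exp (-((L:ℝ)/(4*(a:ℝ)*(c:ℝ)))) ≤ p := by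
      have hx0 : (0:ℝ) ≤ (L:ℝ)/(4*(a:ℝ)*(c:ℝ)) := by positivity
      have e1 : ((L:ℝ)/(4*(a:ℝ)*(c:ℝ)))^2/4 ≤ Real.exp ((L:ℝ)/(4*(a:ℝ)*(c:ℝ))) :=
        exp_quad hx0
      have e2 : p * (((L:ℝ)/(4*(a:ℝ)*(c:ℝ)))^2/4) ≤
          p * Real.exp ((L:ℝ)/(4*(a:ℝ)*(c:ℝ))) :=
        mul_le_mul_of_nonneg_left e1 hp0.le
      have e3 : p * (((L:ℝ)/(4*(a:ℝ)*(c:ℝ)))^2/4)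
          = (p*(L:ℝ))*(L:ℝ)/(64*(a:ℝ)^2*(c:ℝ)^2) := by
        field_simp
        ring
      have e4 : 64*(a:ℝ)^2*(c:ℝ)^2 * (L:ℝ) ≤ (p*(L:ℝ))*(L:ℝ) :=
        mul_le_mul_of_nonneg_right hq64 (Nat.cast_nonneg L)
      have e5 : (L:ℝ) ≤ (p*(L:ℝ))*(L:ℝ)/(64*(a:ℝ)^2*(c:ℝ)^2) := by
        rw [le_div_iff₀ (by positivity)]
        linarith only [e4]
      have e6 : (L:ℝ) ≤ p * Real.exp ((L:ℝ)/(4*(a:ℝ)*(c:ℝ))) := by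
        linarith only [e2, e3, e5]
      rw [Real.exp_neg]
      rw [mul_inv_le_iff₀ (Real.exp_pos _)]
      linarith only [e6]
    have hmono3 : Real.exp (-(((L/a * (Z/c) : ℕ):ℝ) * p^(a*c)))
        ≤ Real.exp (-((L:ℝ)/(4*(a:ℝ)*(c:ℝ)))) :=
      Real.exp_le_exp.mpr (by linarith only [hM3target])
    calc (L:ℝ) * (1 - p ^ (a*c)) ^ (L/a * (Z/c))
        ≤ (L:ℝ) * Real.exp (-(((L/a * (Z/c) : ℕ):ℝ) * p^(a*c))) :=
          mul_le_mul_of_nonneg_left hu3 (Nat.cast_nonneg L)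
      _ ≤ (L:ℝ) * Real.exp (-((L:ℝ)/(4*(a:ℝ)*(c:ℝ)))) :=
          mul_le_mul_of_nonneg_left hmono3 (Nat.cast_nonneg L)
      _ ≤ p := hfinal
  -- T4 ≤ p
  have hA4 : (L:ℝ) * (1-p) ^ (L*L) ≤ p := by
    have hu4 : (1-p) ^ (L*L) ≤ Real.exp (-(((L*L:ℕ):ℝ) * p)) :=
      one_sub_pow_le_exp hp0.le hp1.le _
    have hpL : q^(b*c+2) ≤ p * (L:ℝ) := by
      have s1 : p * q^(b*c+3) ≤ p * (L:ℝ) := mul_le_mul_of_nonneg_left hqL hp0.le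
      have s2 : p * q^(b*c+3) = q^(b*c+2) := by
        rw [pow_succ]
        calc p * (q^(b*c+2) * q) = q^(b*c+2) * (p*q) := by ring
          _ = q^(b*c+2) := by rw [hpq1, mul_one]
      linarith only [s1, s2]
    have hLL : (L:ℝ) ≤ ((L*L:ℕ):ℝ) * p := by
      have s1 : ((L*L:ℕ):ℝ) * p = (p*(L:ℝ))*(L:ℝ) := by push_cast; ring
      have s2 : (1:ℝ) ≤ p*(L:ℝ) := by linarith only [hpL, hqbc1]
      have s3 : 1*(L:ℝ) ≤ (p*(L:ℝ))*(L:ℝ) :=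
        mul_le_mul_of_nonneg_right s2 (Nat.cast_nonneg L)
      rw [s1]
      linarith only [s3]
    have hmono4 : Real.exp (-(((L*L:ℕ):ℝ) * p)) ≤ Real.exp (-(L:ℝ)) :=
      Real.exp_le_exp.mpr (by linarith only [hLL])
    have hfinal : (L:ℝ) * Real.exp (-(L:ℝ)) ≤ p := by
      have e1 : ((L:ℝ))^2/4 ≤ Real.exp (L:ℝ) := exp_quad (Nat.cast_nonneg L)
      have e2 : p * (((L:ℝ))^2/4) ≤ p * Real.exp (L:ℝ) :=
        mul_le_mul_of_nonneg_left e1 hp0.le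
      have e3 : p * (((L:ℝ))^2/4) = (p*(L:ℝ))*(L:ℝ)/4 := by ring
      have s2 : (4:ℝ) ≤ p*(L:ℝ) := by
        have s4 : q ≤ q^(b*c+2) := hq_le_pow _ (by omega)
        linarith only [hpL, s4, hq100]
      have e4 : (L:ℝ) ≤ (p*(L:ℝ))*(L:ℝ)/4 := by
        rw [le_div_iff₀ (by norm_num : (0:ℝ) < 4)]
        have e4' := mul_le_mul_of_nonneg_right s2 (Nat.cast_nonneg L)
        linarith only [e4']
      have e6 : (L:ℝ) ≤ p * Real.exp (L:ℝ) := by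
        linarith only [e2, e3, e4]
      rw [Real.exp_neg, mul_inv_le_iff₀ (Real.exp_pos _)]
      linarith only [e6]
    calc (L:ℝ) * (1-p) ^ (L*L)
        ≤ (L:ℝ) * Real.exp (-(((L*L:ℕ):ℝ) * p)) :=
          mul_le_mul_of_nonneg_left hu4 (Nat.cast_nonneg L)
      _ ≤ (L:ℝ) * Real.exp (-(L:ℝ)) :=
          mul_le_mul_of_nonneg_left hmono4 (Nat.cast_nonneg L)
      _ ≤ p := hfinal
  -- ===== conclusion =====
  have hcompl := PP_add_compl (D := rectF L L L) (p := p) GG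
  have hGGlb : 1 - 5*p ≤ PP (rectF L L L) p GG := by
    have hbad : PP (rectF L L L) p (fun A => ¬ GG A) ≤ 5*p := by
      linarith only [hsplit, hB1, hB2, hB3, hB4, hA1, hA2, hA3, hA4]
    linarith only [hcompl, hbad]
  have hfin : 1 - ε < PP (rectF L L L) p GG := by
    have h5 : 5*p < 5*(ε/16) := by linarith only [hpε]
    linarith only [hGGlb, h5, hε]
  linarith only [hfin, hcond]
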